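/- Let (M^{2n+1}, φ, ξ, η, g) be an α-Kenmotsu manifold with canonical connection ∇̃ and curvature tensor R̃ of ∇̃. Then the following conditions are equivalent: (a) ∇̃R̃ = 0; (b) R̃ = 0; (c) M^{2n+1} has constant Riemannian sectional curvature k = −α²; (d) M^{2n+1} is a locally symmetric Riemannian manifold. -/

import Mathlib

/- Common framework: a (2n+1)-dimensional manifold is modelled by an open subset `s`
of Euclidean space; tensor fields are given pointwise (evaluated on constant vector
fields), connections are given by their Christoffel symbols, and covariant
derivatives / curvatures are expressed via `fderiv`. -/

noncomputable section

namespace AKG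

open scoped RealInnerProductSpace

abbrev E (m : ℕ) : Type := EuclideanSpace ℝ (Fin m)

variable {V : Type*} [NormedAddCommGroup V] [NormedSpace ℝ V]

/-- A Riemannian metric on `s`, as a pointwise symmetric positive bilinear form. -/
def IsMetricOn (s : Set V) (g : V → V → V → ℝ) : Prop :=
  (∀ u v : V, ContDiffOn ℝ (⊤ : ℕ∞) (fun p => g p u v) s) ∧
  (∀ p ∈ s, ∀ u v : V, g p u v = g p v u) ∧
  (∀ p ∈ s, ∀ v : V, IsLinearMap ℝ (fun u : V => g p u v)) ∧
  (∀ p ∈ s, ∀ u : V, u ≠ 0 → 0 < g p u u)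

/-- A linear connection on `s`, via its Christoffel symbols. -/
def IsConnectionOn (s : Set V) (Γ : V → V → V → V) : Prop :=
  (∀ u v : V, ContDiffOn ℝ (⊤ : ℕ∞) (fun p => Γ p u v) s) ∧
  (∀ p ∈ s, ∀ v : V, IsLinearMap ℝ (fun u : V => Γ p u v)) ∧
  (∀ p ∈ s, ∀ u : V, IsLinearMap ℝ (fun v : V => Γ p u v))

/-- The Levi-Civita connection of `g` on `s`: torsion-free and metric. -/
def IsLeviCivitaOn (s : Set V) (g : V → V → V → ℝ) (Γ : V → V → V → V) : Prop :=
  IsConnectionOn s Γ ∧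
  (∀ p ∈ s, ∀ u v : V, Γ p u v = Γ p v u) ∧
  (∀ p ∈ s, ∀ u v w : V,
    fderiv ℝ (fun q => g q v w) p u = g p (Γ p u v) w + g p v (Γ p u w))

/-- Covariant derivative `∇ᵤ X` of a vector field `X` at `p`. -/
def cov (Γ : V → V → V → V) (X : V → V) (p u : V) : V :=
  fderiv ℝ X p u + Γ p u (X p)

/-- Curvature tensor `R(u,v)w` at `p` (evaluated on constant extensions). -/
def Rm (Γ : V → V → V → V) (p u v w : V) : V :=
  fderiv ℝ (fun q => Γ q v w) p u - fderiv ℝ (fun q => Γ q u w) p v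
    + Γ p u (Γ p v w) - Γ p v (Γ p u w)

/-- Covariant derivative `(∇ᵤ A)(v)` of a (1,1)-tensor field `A`. -/
def covOp (Γ : V → V → V → V) (A : V → V → V) (p u v : V) : V :=
  fderiv ℝ (fun q => A q v) p u + Γ p u (A p v) - A p (Γ p u v)

/-- Covariant derivative of a (1,2)-tensor field. -/
def covT2 (Γ : V → V → V → V) (A : V → V → V → V) (p x u v : V) : V :=
  fderiv ℝ (fun q => A q u v) p x + Γ p x (A p u v)
    - A p (Γ p x u) v - A p u (Γ p x v)

/-- Covariant derivative of a (1,3)-tensor field. -/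
def covT3 (Γ : V → V → V → V) (B : V → V → V → V → V) (p x u v w : V) : V :=
  fderiv ℝ (fun q => B q u v w) p x + Γ p x (B p u v w)
    - B p (Γ p x u) v w - B p u (Γ p x v) w - B p u v (Γ p x w)

/-- Local symmetry: `∇R = 0`. -/
def LocallySymmetricOn (s : Set V) (Γ : V → V → V → V) : Prop :=
  ∀ p ∈ s, ∀ x u v w : V, covT3 Γ (Rm Γ) p x u v w = 0

/-- Constant sectional curvature `k`. -/
def ConstCurvOn (s : Set V) (g : V → V → V → ℝ) (Γ : V → V → V → V) (k : ℝ) : Prop :=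
  ∀ p ∈ s, ∀ u v w : V, Rm Γ p u v w = k • (g p v w • u - g p u w • v)

def HasConstCurv (s : Set V) (g : V → V → V → ℝ) (k : ℝ) : Prop :=
  ∃ Γ : V → V → V → V, IsLeviCivitaOn s g Γ ∧ ConstCurvOn s g Γ k

/-- Torsion of a connection (with the factor 1/2 normalization of the paper). -/
def torsion (Γ : V → V → V → V) (p u v : V) : V := (2 : ℝ)⁻¹ • (Γ p u v - Γ p v u)

/-- An almost contact metric structure on `s`. -/
structure ACM (s : Set V) where
  phi : V → V → V
  xi : V → V
  eta : V → V → ℝ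
  g : V → V → V → ℝ
  smooth_phi : ∀ u : V, ContDiffOn ℝ (⊤ : ℕ∞) (fun p => phi p u) s
  smooth_xi : ContDiffOn ℝ (⊤ : ℕ∞) xi s
  smooth_eta : ∀ u : V, ContDiffOn ℝ (⊤ : ℕ∞) (fun p => eta p u) s
  lin_phi : ∀ p ∈ s, IsLinearMap ℝ (phi p)
  lin_eta : ∀ p ∈ s, IsLinearMap ℝ (eta p)
  metric : IsMetricOn s g
  phi_sq : ∀ p ∈ s, ∀ u : V, phi p (phi p u) = -u + eta p u • xi p
  eta_xi : ∀ p ∈ s, eta p (xi p) = 1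
  compat : ∀ p ∈ s, ∀ u v : V, g p (phi p u) (phi p v) = g p u v - eta p u * eta p v

/-- Fundamental 2-form `Φ(u,v) = g(u, φ v)`. -/
def FPhi {s : Set V} (S : ACM s) (p u v : V) : ℝ := S.g p u (S.phi p v)

/-- Lie derivative `(L_ξ φ)(u)` at `p` (constant extension of `u`). -/
def lieXiPhi (phi : V → V → V) (xi : V → V) (p u : V) : V :=
  fderiv ℝ (fun q => phi q u) p (xi p) - fderiv ℝ xi p (phi p u)
    + phi p (fderiv ℝ xi p u)

/-- The operator `h' = (1/(2α)) (L_ξ φ) ∘ φ`. -/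
def hpr (α : ℝ) (phi : V → V → V) (xi : V → V) (p u : V) : V :=
  (1 / (2 * α)) • lieXiPhi phi xi p (phi p u)

/-- `dη(u,v)` (constant extensions). -/
def dEta (eta : V → V → ℝ) (p u v : V) : ℝ :=
  fderiv ℝ (fun q => eta q v) p u - fderiv ℝ (fun q => eta q u) p v

/-- `S` is an almost α-Kenmotsu structure on `s` : `dη = 0` and `dΦ = 2α η ∧ Φ`. -/
structure IsAK (s : Set V) (S : ACM s) (α : ℝ) : Prop where
  pos : 0 < α
  deta : ∀ p ∈ s, ∀ u v : V, dEta S.eta p u v = 0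
  dphi : ∀ p ∈ s, ∀ u v w : V,
    fderiv ℝ (fun q => FPhi S q v w) p u - fderiv ℝ (fun q => FPhi S q u w) p v
      + fderiv ℝ (fun q => FPhi S q u v) p w
    = 2 * α * (S.eta p u * FPhi S p v w - S.eta p v * FPhi S p u w
        + S.eta p w * FPhi S p u v)

/-- Nijenhuis torsion `[φ,φ](u,v)` at `p` (constant extensions). -/
def nijPhi (phi : V → V → V) (p u v : V) : V :=
  fderiv ℝ (fun q => phi q v) p (phi p u) - fderiv ℝ (fun q => phi q u) p (phi p v)
    + phi p (fderiv ℝ (fun q => phi q u) p v) - phi p (fderiv ℝ (fun q => phi q v) p u)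

/-- Normality: `N = [φ,φ] + 2 dη ⊗ ξ = 0`. -/
def IsNormal (s : Set V) (S : ACM s) : Prop :=
  ∀ p ∈ s, ∀ u v : V, nijPhi S.phi p u v + (2 * dEta S.eta p u v) • S.xi p = 0

/-- CR-integrability: the Nijenhuis torsion of φ vanishes on `D = ker η`
(equivalently the integral manifolds of `D` are Kähler). -/
def CRIntegrableOn (s : Set V) (S : ACM s) : Prop :=
  ∀ p ∈ s, ∀ u v : V, S.eta p u = 0 → S.eta p v = 0 → nijPhi S.phi p u v = 0

/-- `ξ` belongs to the (κ,μ)'-nullity distribution. -/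
def KMuNullity (s : Set V) (S : ACM s) (α κ μ : ℝ) (Γ : V → V → V → V) : Prop :=
  ∀ p ∈ s, ∀ u v : V,
    Rm Γ p u v (S.xi p)
      = κ • (S.eta p v • u - S.eta p u • v)
        + μ • (S.eta p v • hpr α S.phi S.xi p u - S.eta p u • hpr α S.phi S.xi p v)

/-- `h'` is η-parallel. -/
def EtaParallelH (s : Set V) (S : ACM s) (α : ℝ) (Γ : V → V → V → V) : Prop :=
  ∀ p ∈ s, ∀ u v w : V, S.eta p u = 0 → S.eta p v = 0 → S.eta p w = 0 →
    S.g p (covOp Γ (hpr α S.phi S.xi) p u v) w = 0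

/-- `∇_ξ h' = 0`. -/
def XiParallelH (s : Set V) (S : ACM s) (α : ℝ) (Γ : V → V → V → V) : Prop :=
  ∀ p ∈ s, ∀ v : V, covOp Γ (hpr α S.phi S.xi) p (S.xi p) v = 0

/-- The canonical connection `∇̃_X Y = ∇_X Y + α g(X + h'X, Y)ξ − α η(Y)(X + h'X)`. -/
def canonical {s : Set V} (α : ℝ) (S : ACM s) (Γ : V → V → V → V) : V → V → V → V :=
  fun p u v =>
    Γ p u v + (α * S.g p (u + hpr α S.phi S.xi p u) v) • S.xi p
      - (α * S.eta p v) • (u + hpr α S.phi S.xi p u)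

def ParallelTorsion (s : Set V) (Γ : V → V → V → V) : Prop :=
  ∀ p ∈ s, ∀ x u v : V, covT2 Γ (torsion Γ) p x u v = 0

def ParallelCurv (s : Set V) (Γ : V → V → V → V) : Prop :=
  ∀ p ∈ s, ∀ x u v w : V, covT3 Γ (Rm Γ) p x u v w = 0

def FlatCurv (s : Set V) (Γ : V → V → V → V) : Prop :=
  ∀ p ∈ s, ∀ u v w : V, Rm Γ p u v w = 0

def HasEigen (h : V → V) (c : ℝ) : Prop := ∃ u : V, u ≠ 0 ∧ h u = c • u

/-- Multiplicity of the eigenvalue `c` of a (pointwise linear) operator. -/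
def eigMult (h : V → V) (c : ℝ) : ℕ :=
  Module.finrank ℝ ↥(Submodule.span ℝ {u : V | h u = c • u})

/-- `0` is a simple eigenvalue of `h'`: its kernel is spanned by `ξ`. -/
def KernelIsXiLine (xi₀ : V) (h : V → V) : Prop :=
  ∀ u : V, h u = 0 → ∃ a : ℝ, u = a • xi₀

def hprNonzero (s : Set V) (S : ACM s) (α : ℝ) : Prop :=
  ∃ p ∈ s, ∃ u : V, hpr α S.phi S.xi p u ≠ 0

/-- `S'` is the D-homothetic deformation of `S` with constant `β`. -/
def IsDHom (s : Set V) (S S' : ACM s) (β : ℝ) : Prop :=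
  ∀ p ∈ s,
    (∀ u : V, S'.phi p u = S.phi p u) ∧ S'.xi p = β⁻¹ • S.xi p ∧
    (∀ u : V, S'.eta p u = β * S.eta p u) ∧
    (∀ u v : V, S'.g p u v = β * S.g p u v + β * (β - 1) * (S.eta p u * S.eta p v))

/-- Local equivalence of almost contact metric structures. -/
def LocallyEquivalent (s : Set V) (S : ACM s) (s' : Set V) (S' : ACM s') : Prop :=
  ∀ p ∈ s, ∀ q ∈ s', ∃ (U U' : Set V) (f finv : V → V),
    p ∈ U ∧ IsOpen U ∧ U ⊆ s ∧ q ∈ U' ∧ IsOpen U' ∧ U' ⊆ s' ∧ f p = q ∧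
    ContDiffOn ℝ (⊤ : ℕ∞) f U ∧ Set.BijOn f U U' ∧
    ContDiffOn ℝ (⊤ : ℕ∞) finv U' ∧ (∀ x ∈ U, finv (f x) = x) ∧
    ∀ x ∈ U,
      fderiv ℝ f x (S.xi x) = S'.xi (f x) ∧
      (∀ u : V, fderiv ℝ f x (S.phi x u) = S'.phi (f x) (fderiv ℝ f x u)) ∧
      (∀ u : V, S'.eta (f x) (fderiv ℝ f x u) = S.eta x u) ∧
      (∀ u v : V, S'.g (f x) (fderiv ℝ f x u) (fderiv ℝ f x v) = S.g x u v)

/-- Local equivalence up to a D-homothetic deformation. -/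
def EquivUpToDHom (s : Set V) (S : ACM s) (s' : Set V) (S' : ACM s') : Prop :=
  ∃ β : ℝ, 0 < β ∧ ∃ S₁ : ACM s, IsDHom s S S₁ β ∧ LocallyEquivalent s S₁ s' S'

/-- Involutivity (integrability) of a distribution. -/
def IsInvolutive (s : Set V) (D : V → Set V) : Prop :=
  ∀ X Y : V → V, (∀ p ∈ s, DifferentiableAt ℝ X p) → (∀ p ∈ s, DifferentiableAt ℝ Y p) →
    (∀ p ∈ s, X p ∈ D p) → (∀ p ∈ s, Y p ∈ D p) →
    ∀ p ∈ s, fderiv ℝ Y p (X p) - fderiv ℝ X p (Y p) ∈ D p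

/-- The leaves of the distribution `D` are totally geodesic. -/
def TotallyGeodesicDist (s : Set V) (D : V → Set V) (Γ : V → V → V → V) : Prop :=
  ∀ X Y : V → V, (∀ p ∈ s, DifferentiableAt ℝ X p) → (∀ p ∈ s, DifferentiableAt ℝ Y p) →
    (∀ p ∈ s, X p ∈ D p) → (∀ p ∈ s, Y p ∈ D p) →
    ∀ p ∈ s, cov Γ Y p (X p) ∈ D p

/-- The leaves of the distribution `D` are totally umbilical. -/
def TotallyUmbilicalDist (s : Set V) (D : V → Set V) (g : V → V → V → ℝ)
    (Γ : V → V → V → V) : Prop :=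
  ∃ H : V → V, (∀ p ∈ s, ∀ w ∈ D p, g p (H p) w = 0) ∧
    ∀ X Y : V → V, (∀ p ∈ s, DifferentiableAt ℝ X p) → (∀ p ∈ s, DifferentiableAt ℝ Y p) →
      (∀ p ∈ s, X p ∈ D p) → (∀ p ∈ s, Y p ∈ D p) →
      ∀ p ∈ s, cov Γ Y p (X p) - g p (X p) (Y p) • H p ∈ D p

/-- The eigendistribution `[λ]` of `h'`. -/
def eigDist {s : Set V} (α : ℝ) (S : ACM s) (lam : ℝ) : V → Set V :=
  fun p => {u : V | hpr α S.phi S.xi p u = lam • u ∧ S.eta p u = 0}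

/-- The distribution `[ξ] ⊕ [λ]`. -/
def xiPlusEigDist {s : Set V} (α : ℝ) (S : ACM s) (lam : ℝ) : V → Set V :=
  fun p => {u : V | hpr α S.phi S.xi p u = lam • (u - S.eta p u • S.xi p)}

/-- An almost Hermitian structure on an open set of `E m`. -/
structure AHerm (m : ℕ) (W : Set (E m)) where
  J : E m → E m → E m
  h : E m → E m → E m → ℝ
  smooth_J : ∀ u : E m, ContDiffOn ℝ (⊤ : ℕ∞) (fun p => J p u) W
  lin_J : ∀ p ∈ W, IsLinearMap ℝ (J p)
  metric : IsMetricOn W h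
  J_sq : ∀ p ∈ W, ∀ u : E m, J p (J p u) = -u
  compat : ∀ p ∈ W, ∀ u v : E m, h p (J p u) (J p v) = h p u v

/-- The Kähler form of an almost Hermitian structure. -/
def Kform {m : ℕ} {W : Set (E m)} (K : AHerm m W) (p u v : E m) : ℝ := K.h p u (K.J p v)

/-- Almost Kähler: the Kähler form is closed. -/
def IsAlmostKaehler {m : ℕ} {W : Set (E m)} (K : AHerm m W) : Prop :=
  ∀ p ∈ W, ∀ u v w : E m,
    fderiv ℝ (fun q => Kform K q v w) p u - fderiv ℝ (fun q => Kform K q u w) p v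
      + fderiv ℝ (fun q => Kform K q u v) p w = 0

/-- Kähler: almost Kähler with integrable `J`. -/
def IsKaehler {m : ℕ} {W : Set (E m)} (K : AHerm m W) : Prop :=
  IsAlmostKaehler K ∧ ∀ p ∈ W, ∀ u v : E m, nijPhi K.J p u v = 0

/-- `M` is locally a warped product `M' ×_f N` of an open interval and an almost
Kähler manifold, with warping function `f = c e^{α t}`. -/
def LocWarpedIntervalAK (n : ℕ) (s : Set (E (2*n+1))) (S : ACM s) (α : ℝ) : Prop :=
  ∀ p ∈ s, ∃ (U : Set (E (2*n+1))) (I : Set ℝ) (W : Set (E (2*n)))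
    (K : AHerm (2*n) W) (c : ℝ) (ψ : E (2*n+1) → ℝ × E (2*n))
    (χ : ℝ × E (2*n) → E (2*n+1)),
    p ∈ U ∧ IsOpen U ∧ U ⊆ s ∧ IsOpen I ∧ I.OrdConnected ∧ IsOpen W ∧
    IsAlmostKaehler K ∧ 0 < c ∧
    ContDiffOn ℝ (⊤ : ℕ∞) ψ U ∧ Set.BijOn ψ U (I ×ˢ W) ∧
    ContDiffOn ℝ (⊤ : ℕ∞) χ (I ×ˢ W) ∧ (∀ x ∈ U, χ (ψ x) = x) ∧
    ∀ q ∈ U, ∀ u v : E (2*n+1),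
      S.g q u v = (fderiv ℝ ψ q u).1 * (fderiv ℝ ψ q v).1
        + (c * Real.exp (α * (ψ q).1))^2
          * K.h (ψ q).2 (fderiv ℝ ψ q u).2 (fderiv ℝ ψ q v).2

/-- Local isometry with a Riemannian product of constant curvature manifolds. -/
def LocIsomProd (m n₁ n₂ : ℕ) (s : Set (E m)) (g : E m → E m → E m → ℝ)
    (k₁ k₂ : ℝ) : Prop :=
  ∀ p ∈ s, ∃ (U : Set (E m)) (W₁ : Set (E n₁)) (W₂ : Set (E n₂))
    (g₁ : E n₁ → E n₁ → E n₁ → ℝ) (g₂ : E n₂ → E n₂ → E n₂ → ℝ)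
    (ψ : E m → E n₁ × E n₂) (χ : E n₁ × E n₂ → E m),
    p ∈ U ∧ IsOpen U ∧ U ⊆ s ∧ IsOpen W₁ ∧ IsOpen W₂ ∧
    IsMetricOn W₁ g₁ ∧ IsMetricOn W₂ g₂ ∧
    HasConstCurv W₁ g₁ k₁ ∧ HasConstCurv W₂ g₂ k₂ ∧
    ContDiffOn ℝ (⊤ : ℕ∞) ψ U ∧ Set.BijOn ψ U (W₁ ×ˢ W₂) ∧
    ContDiffOn ℝ (⊤ : ℕ∞) χ (W₁ ×ˢ W₂) ∧ (∀ x ∈ U, χ (ψ x) = x) ∧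
    ∀ q ∈ U, ∀ u v : E m,
      g q u v = g₁ (ψ q).1 (fderiv ℝ ψ q u).1 (fderiv ℝ ψ q v).1
        + g₂ (ψ q).2 (fderiv ℝ ψ q u).2 (fderiv ℝ ψ q v).2

/-- The axioms characterizing the canonical connection of a CR-integrable
almost α-Kenmotsu structure: `φ`, `g`, `η` parallel, together with the
torsion conditions a), b), c). -/
def IsCanonicalFor (s : Set V) (S : ACM s) (α : ℝ) (Γt : V → V → V → V) : Prop :=
  IsConnectionOn s Γt ∧
  (∀ p ∈ s, ∀ u v : V, covOp Γt S.phi p u v = 0) ∧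
  (∀ p ∈ s, ∀ u v w : V,
    fderiv ℝ (fun q => S.g q v w) p u = S.g p (Γt p u v) w + S.g p v (Γt p u w)) ∧
  (∀ p ∈ s, ∀ u v : V, fderiv ℝ (fun q => S.eta q v) p u = S.eta p (Γt p u v)) ∧
  (∀ p ∈ s, ∀ u v : V, S.eta p u = 0 → S.eta p v = 0 → torsion Γt p u v = 0) ∧
  (∀ p ∈ s, ∀ u : V, S.eta p u = 0 →
    (2 : ℝ) • torsion Γt p (S.xi p) u = α • (u + hpr α S.phi S.xi p u)) ∧
  (∀ p ∈ s, ∀ u v : V, S.g p (torsion Γt p (S.xi p) u) v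
    = S.g p u (torsion Γt p (S.xi p) v))

set_option linter.unusedSectionVars false
set_option linter.unusedVariables false
set_option maxHeartbeats 1000000

section Infra
variable {V : Type*} [NormedAddCommGroup V] [NormedSpace ℝ V] [FiniteDimensional ℝ V]
variable {W : Type*} [NormedAddCommGroup W] [NormedSpace ℝ W]

lemma diffAt_of_contDiffOn {s : Set V} (hs : IsOpen s) {p : V} (hp : p ∈ s)
    {f : V → W} (hf : ContDiffOn ℝ (⊤ : ℕ∞) f s) : DifferentiableAt ℝ f p :=
  (hf.differentiableOn (by simp)).differentiableAt (hs.mem_nhds hp)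

lemma fam1 {s : Set V} (hs : IsOpen s) {p : V} (hp : p ∈ s)
    (F : V → V → W) (hFd : ∀ u : V, DifferentiableAt ℝ (fun q => F q u) p)
    (hFl : ∀ q ∈ s, IsLinearMap ℝ (F q))
    {X : V → V} (hX : DifferentiableAt ℝ X p) :
    DifferentiableAt ℝ (fun q => F q (X q)) p ∧
      ∀ x : V, fderiv ℝ (fun q => F q (X q)) p x
        = fderiv ℝ (fun q => F q (X p)) p x + F p (fderiv ℝ X p x) := by
  classical
  set b := Module.finBasis ℝ V with hb
  set c : Fin (Module.finrank ℝ V) → V →L[ℝ] ℝ :=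
    fun i => LinearMap.toContinuousLinearMap (b.coord i) with hc
  have hrepr : ∀ y : V, ∑ i, c i y • b i = y := by
    intro y
    simpa [hc] using b.sum_repr y
  have hexp : ∀ q ∈ s, ∀ y : V, F q y = ∑ i, c i y • F q (b i) := by
    intro q hq y
    have hL := hFl q hq
    calc F q y = F q (∑ i, c i y • b i) := by rw [hrepr]
    _ = ∑ i, c i y • F q (b i) := by
        rw [show F q = ⇑(IsLinearMap.mk' (F q) hL) from rfl, map_sum]
        simp
  have heq : (fun q => F q (X q)) =ᶠ[nhds p] (fun q => ∑ i, c i (X q) • F q (b i)) := by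
    filter_upwards [hs.mem_nhds hp] with q hq
    exact hexp q hq (X q)
  have hdc : ∀ i, DifferentiableAt ℝ (fun q => c i (X q)) p :=
    fun i => ((c i).differentiableAt).comp p hX
  have hterm : ∀ i, DifferentiableAt ℝ (fun q => c i (X q) • F q (b i)) p := by
    intro i
    exact (hdc i).smul (hFd (b i))
  have hGd : DifferentiableAt ℝ (fun q => ∑ i, c i (X q) • F q (b i)) p :=
    DifferentiableAt.fun_sum fun i _ => hterm i
  have hd : DifferentiableAt ℝ (fun q => F q (X q)) p := hGd.congr_of_eventuallyEq heq
  refine ⟨hd, ?_⟩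
  intro x
  have h1 : fderiv ℝ (fun q => F q (X q)) p
      = fderiv ℝ (fun q => ∑ i, c i (X q) • F q (b i)) p := heq.fderiv_eq
  have hcomp : ∀ i, fderiv ℝ (fun q => c i (X q)) p = (c i).comp (fderiv ℝ X p) :=
    fun i => ((c i).hasFDerivAt.comp p hX.hasFDerivAt).fderiv
  have h2 : fderiv ℝ (fun q => ∑ i, c i (X q) • F q (b i)) p x
      = ∑ i, (c i (fderiv ℝ X p x) • F p (b i)
          + c i (X p) • fderiv ℝ (fun q => F q (b i)) p x) := by
    rw [fderiv_fun_sum fun i _ => hterm i]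
    rw [ContinuousLinearMap.sum_apply]
    refine Finset.sum_congr rfl fun i _ => ?_
    rw [fderiv_fun_smul (hdc i) (hFd (b i))]
    simp [hcomp i, add_comm]
  have h3 : ∑ i, c i (fderiv ℝ X p x) • F p (b i) = F p (fderiv ℝ X p x) :=
    (hexp p hp _).symm
  have h4 : ∑ i, c i (X p) • fderiv ℝ (fun q => F q (b i)) p x
      = fderiv ℝ (fun q => F q (X p)) p x := by
    have heq2 : (fun q => F q (X p)) =ᶠ[nhds p]
        (fun q => ∑ i, c i (X p) • F q (b i)) := by
      filter_upwards [hs.mem_nhds hp] with q hq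
      exact hexp q hq (X p)
    rw [heq2.fderiv_eq]
    rw [fderiv_fun_sum (A := fun i q => c i (X p) • F q (b i)) fun i _ => (hFd (b i)).const_smul (c i (X p))]
    rw [ContinuousLinearMap.sum_apply]
    refine Finset.sum_congr rfl fun i _ => ?_
    rw [fderiv_fun_const_smul (hFd (b i))]
    simp
  rw [h1, h2, Finset.sum_add_distrib, h3, h4, add_comm]

lemma fam2 {s : Set V} (hs : IsOpen s) {p : V} (hp : p ∈ s)
    (B : V → V → V → W) (hBd : ∀ u v : V, DifferentiableAt ℝ (fun q => B q u v) p)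
    (hBl1 : ∀ q ∈ s, ∀ v : V, IsLinearMap ℝ (fun u => B q u v))
    (hBl2 : ∀ q ∈ s, ∀ u : V, IsLinearMap ℝ (fun v => B q u v))
    {X Y : V → V} (hX : DifferentiableAt ℝ X p) (hY : DifferentiableAt ℝ Y p) :
    DifferentiableAt ℝ (fun q => B q (X q) (Y q)) p ∧
      ∀ x : V, fderiv ℝ (fun q => B q (X q) (Y q)) p x
        = fderiv ℝ (fun q => B q (X p) (Y p)) p x
          + B p (fderiv ℝ X p x) (Y p) + B p (X p) (fderiv ℝ Y p x) := by
  -- first: for each fixed u, handle q ↦ B q u (Y q)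
  have inner : ∀ u : V, DifferentiableAt ℝ (fun q => B q u (Y q)) p ∧
      ∀ x : V, fderiv ℝ (fun q => B q u (Y q)) p x
        = fderiv ℝ (fun q => B q u (Y p)) p x + B p u (fderiv ℝ Y p x) :=
    fun u => fam1 hs hp (fun q v => B q u v) (fun v => hBd u v)
      (fun q hq => hBl2 q hq u) hY
  have outer := fam1 hs hp (fun q u => B q u (Y q)) (fun u => (inner u).1)
    (fun q hq => by
      constructor
      · intro a b; exact (hBl1 q hq (Y q)).1 a b
      · intro t a; exact (hBl1 q hq (Y q)).2 t a) hX
  refine ⟨outer.1, ?_⟩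
  intro x
  rw [outer.2 x, (inner (X p)).2 x]
  abel

end Infra

section Main
variable {V : Type*} [NormedAddCommGroup V] [NormedSpace ℝ V] [FiniteDimensional ℝ V]
variable {s : Set V} (S : ACM s) {p : V}

-- linearity simp lemmas
lemma g_addl (hp : p ∈ s) (u v w : V) : S.g p (u + v) w = S.g p u w + S.g p v w :=
  (S.metric.2.2.1 p hp w).1 u v
lemma g_smull (hp : p ∈ s) (t : ℝ) (u w : V) : S.g p (t • u) w = t * S.g p u w :=
  (S.metric.2.2.1 p hp w).2 t u
lemma g_symm (hp : p ∈ s) (u v : V) : S.g p u v = S.g p v u := S.metric.2.1 p hp u v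
lemma g_addr (hp : p ∈ s) (u v w : V) : S.g p u (v + w) = S.g p u v + S.g p u w := by
  rw [g_symm S hp, g_addl S hp, g_symm S hp v, g_symm S hp w]
lemma g_smulr (hp : p ∈ s) (t : ℝ) (u w : V) : S.g p u (t • w) = t * S.g p u w := by
  rw [g_symm S hp, g_smull S hp, g_symm S hp w]
lemma g_negl (hp : p ∈ s) (u w : V) : S.g p (-u) w = -S.g p u w := by
  have := g_smull S hp (-1) u w; simpa using this
lemma g_negr (hp : p ∈ s) (u w : V) : S.g p u (-w) = -S.g p u w := by
  rw [g_symm S hp, g_negl S hp, g_symm S hp u w]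
lemma g_subl (hp : p ∈ s) (u v w : V) : S.g p (u - v) w = S.g p u w - S.g p v w := by
  rw [sub_eq_add_neg, g_addl S hp, g_negl S hp]; ring
lemma g_subr (hp : p ∈ s) (u v w : V) : S.g p u (v - w) = S.g p u v - S.g p u w := by
  rw [sub_eq_add_neg, g_addr S hp, g_negr S hp]; ring
lemma g_zerol (hp : p ∈ s) (w : V) : S.g p 0 w = 0 := by
  have := g_smull S hp 0 0 w; simpa using this
lemma g_zeror (hp : p ∈ s) (w : V) : S.g p w 0 = 0 := by
  rw [g_symm S hp]; exact g_zerol S hp w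

lemma eta_addl (hp : p ∈ s) (u v : V) : S.eta p (u + v) = S.eta p u + S.eta p v :=
  (S.lin_eta p hp).1 u v
lemma eta_smull (hp : p ∈ s) (t : ℝ) (u : V) : S.eta p (t • u) = t * S.eta p u :=
  (S.lin_eta p hp).2 t u
lemma eta_negl (hp : p ∈ s) (u : V) : S.eta p (-u) = -S.eta p u := by
  have := eta_smull S hp (-1) u; simpa using this
lemma eta_subl (hp : p ∈ s) (u v : V) : S.eta p (u - v) = S.eta p u - S.eta p v := by
  rw [sub_eq_add_neg, eta_addl S hp, eta_negl S hp]; ring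
lemma eta_zero (hp : p ∈ s) : S.eta p 0 = 0 := by
  have := eta_smull S hp 0 0; simpa using this

lemma phi_addl (hp : p ∈ s) (u v : V) : S.phi p (u + v) = S.phi p u + S.phi p v :=
  (S.lin_phi p hp).1 u v
lemma phi_smull (hp : p ∈ s) (t : ℝ) (u : V) : S.phi p (t • u) = t • S.phi p u :=
  (S.lin_phi p hp).2 t u
lemma phi_zero (hp : p ∈ s) : S.phi p 0 = 0 := by
  have := phi_smull S hp 0 0; simpa using this
lemma phi_negl (hp : p ∈ s) (u : V) : S.phi p (-u) = -S.phi p u := by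
  have := phi_smull S hp (-1) u; simpa using this
lemma phi_subl (hp : p ∈ s) (u v : V) : S.phi p (u - v) = S.phi p u - S.phi p v := by
  rw [sub_eq_add_neg, phi_addl S hp, phi_negl S hp, sub_eq_add_neg]

lemma xi_ne (hp : p ∈ s) : S.xi p ≠ 0 := by
  intro hxi
  have := S.eta_xi p hp
  rw [hxi, eta_zero S hp] at this; norm_num at this

/-- `φ ξ = 0`. -/
lemma phi_xi (hp : p ∈ s) : S.phi p (S.xi p) = 0 := by
  have h1 : S.phi p (S.phi p (S.xi p)) = 0 := by
    rw [S.phi_sq p hp, S.eta_xi p hp, one_smul]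
    exact neg_add_cancel _
  have h2 := S.phi_sq p hp (S.phi p (S.xi p))
  rw [h1, phi_zero S hp] at h2
  have h3 : S.phi p (S.xi p) = S.eta p (S.phi p (S.xi p)) • S.xi p := by
    rw [neg_add_eq_sub] at h2
    exact (sub_eq_zero.mp h2.symm).symm
  set t := S.eta p (S.phi p (S.xi p)) with ht
  have h4 : S.phi p (S.phi p (S.xi p)) = (t * t) • S.xi p := by
    rw [h3, phi_smull S hp, h3, smul_smul]
  rw [h1] at h4
  rcases smul_eq_zero.mp h4.symm with h | h
  · rw [h3, mul_self_eq_zero.mp h, zero_smul]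
  · exact absurd h (xi_ne S hp)

/-- `η ∘ φ = 0`. -/
lemma eta_phi (hp : p ∈ s) (u : V) : S.eta p (S.phi p u) = 0 := by
  have h1 : S.phi p (S.phi p (S.phi p u)) = -(S.phi p u) + S.eta p (S.phi p u) • S.xi p :=
    S.phi_sq p hp _
  have h2 : S.phi p (S.phi p (S.phi p u)) = -(S.phi p u) := by
    rw [S.phi_sq p hp u, phi_addl S hp, phi_negl S hp, phi_smull S hp, phi_xi S hp,
      smul_zero, add_zero]
  have h3 : S.eta p (S.phi p u) • S.xi p = 0 := left_eq_add.mp (h2.symm.trans h1)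
  rcases smul_eq_zero.mp h3 with h | h
  · exact h
  · exact absurd h (xi_ne S hp)

/-- `η u = g(u, ξ)`. -/
lemma eta_eq_g_xi (hp : p ∈ s) (u : V) : S.eta p u = S.g p u (S.xi p) := by
  have := S.compat p hp u (S.xi p)
  rw [phi_xi S hp, g_zeror S hp, S.eta_xi p hp] at this
  linarith

/-- skewness: `g(φu, v) = -g(u, φv)`. -/
lemma g_phi_skew (hp : p ∈ s) (u v : V) : S.g p (S.phi p u) v = -S.g p u (S.phi p v) := by
  have h := S.compat p hp (S.phi p u) v
  rw [eta_phi S hp, zero_mul, sub_zero] at h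
  rw [S.phi_sq p hp u, g_addl S hp, g_negl S hp, g_smull S hp] at h
  have h2 : S.g p (S.xi p) (S.phi p v) = 0 := by
    rw [g_symm S hp, ← eta_eq_g_xi S hp, eta_phi S hp]
  rw [h2, mul_zero, add_zero] at h
  linarith

/-- nondegeneracy. -/
lemma g_nondeg (hp : p ∈ s) {z : V} (h : ∀ w : V, S.g p z w = 0) : z = 0 := by
  by_contra hz
  have := S.metric.2.2.2 p hp z hz
  rw [h z] at this; exact lt_irrefl 0 this

/-- kernel of φ is the ξ-line. -/
lemma ker_phi (hp : p ∈ s) {z : V} (h : S.phi p z = 0) : z = S.eta p z • S.xi p := by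
  have h2 := S.phi_sq p hp z
  rw [h, phi_zero S hp, neg_add_eq_sub] at h2
  exact (sub_eq_zero.mp h2.symm).symm

lemma g_xi_xi (hp : p ∈ s) : S.g p (S.xi p) (S.xi p) = 1 := by
  rw [← eta_eq_g_xi S hp, S.eta_xi p hp]

end Main


section PartB
variable {V : Type*} [NormedAddCommGroup V] [NormedSpace ℝ V] [FiniteDimensional ℝ V]
variable {s : Set V} {S : ACM s} {p : V} {α : ℝ} {Γ : V → V → V → V}

lemma g_lin2 (S : ACM s) : ∀ q ∈ s, ∀ u : V, IsLinearMap ℝ (fun v => S.g q u v) :=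
  fun q hq u => ⟨fun a b => g_addr S hq u a b, fun t a => g_smulr S hq t u a⟩

lemma phid (S : ACM s) (hs : IsOpen s) (hp : p ∈ s) (u : V) :
    DifferentiableAt ℝ (fun q => S.phi q u) p :=
  diffAt_of_contDiffOn hs hp (S.smooth_phi u)

lemma etad (S : ACM s) (hs : IsOpen s) (hp : p ∈ s) (u : V) :
    DifferentiableAt ℝ (fun q => S.eta q u) p :=
  diffAt_of_contDiffOn hs hp (S.smooth_eta u)

lemma gd (S : ACM s) (hs : IsOpen s) (hp : p ∈ s) (u v : V) :
    DifferentiableAt ℝ (fun q => S.g q u v) p :=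
  diffAt_of_contDiffOn hs hp (S.metric.1 u v)

lemma xid (S : ACM s) (hs : IsOpen s) (hp : p ∈ s) :
    DifferentiableAt ℝ S.xi p :=
  diffAt_of_contDiffOn hs hp S.smooth_xi

lemma Γd (hΓ : IsConnectionOn s Γ) (hs : IsOpen s) (hp : p ∈ s) (u v : V) :
    DifferentiableAt ℝ (fun q => Γ q u v) p :=
  diffAt_of_contDiffOn hs hp (hΓ.1 u v)

/-- derivative of `q ↦ φ_q (ξ p)`. -/
lemma dphi_xi (S : ACM s) (hs : IsOpen s) (hp : p ∈ s) (x : V) :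
    fderiv ℝ (fun q => S.phi q (S.xi p)) p x = - S.phi p (fderiv ℝ S.xi p x) := by
  have h0 : (fun q => S.phi q (S.xi q)) =ᶠ[nhds p] (fun _ => (0:V)) := by
    filter_upwards [hs.mem_nhds hp] with q hq; exact phi_xi S hq
  have h1 : fderiv ℝ (fun q => S.phi q (S.xi q)) p = 0 := by
    rw [h0.fderiv_eq]; exact fderiv_const_apply _
  have h2 := (fam1 hs hp S.phi (phid S hs hp) S.lin_phi (xid S hs hp)).2 x
  rw [h1] at h2
  rw [ContinuousLinearMap.zero_apply] at h2
  exact eq_neg_of_add_eq_zero_left h2.symm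

/-- the Lie derivative `L_ξ φ` vanishes (from normality and `dη = 0`). -/
lemma lie_zero (S : ACM s) (hs : IsOpen s) (hp : p ∈ s) (hAK : IsAK s S α)
    (hN : IsNormal s S) (v : V) : lieXiPhi S.phi S.xi p v = 0 := by
  have hnij : nijPhi S.phi p (S.xi p) v = 0 := by
    have h := hN p hp (S.xi p) v
    rw [hAK.deta p hp] at h
    simpa using h
  unfold nijPhi at hnij
  rw [phi_xi S hp] at hnij
  rw [show fderiv ℝ (fun q => S.phi q v) p 0 = 0 from (fderiv ℝ _ p).map_zero] at hnij
  rw [dphi_xi S hs hp (S.phi p v), dphi_xi S hs hp v] at hnij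
  rw [phi_negl S hp] at hnij
  have hL : S.phi p (lieXiPhi S.phi S.xi p v) = 0 := by
    unfold lieXiPhi
    rw [phi_addl S hp, phi_subl S hp]
    calc S.phi p (fderiv ℝ (fun q => S.phi q v) p (S.xi p))
          - S.phi p (fderiv ℝ S.xi p (S.phi p v))
          + S.phi p (S.phi p (fderiv ℝ S.xi p v))
        = -(0 - - S.phi p (fderiv ℝ S.xi p (S.phi p v))
            + - S.phi p (S.phi p (fderiv ℝ S.xi p v))
            - S.phi p (fderiv ℝ (fun q => S.phi q v) p (S.xi p))) := by module
      _ = 0 := by rw [hnij, neg_zero]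
  have heta : S.eta p (lieXiPhi S.phi S.xi p v) = 0 := by
    have e1 : ∀ x : V, S.eta p (fderiv ℝ (fun q => S.phi q v) p x)
        = - fderiv ℝ (fun q => S.eta q (S.phi p v)) p x := by
      intro x
      have h0 : (fun q => S.eta q (S.phi q v)) =ᶠ[nhds p] (fun _ => (0:ℝ)) := by
        filter_upwards [hs.mem_nhds hp] with q hq; exact eta_phi S hq v
      have h1 : fderiv ℝ (fun q => S.eta q (S.phi q v)) p = 0 := by
        rw [h0.fderiv_eq]; exact fderiv_const_apply _
      have h2 := (fam1 hs hp S.eta (etad S hs hp) S.lin_eta (phid S hs hp v)).2 x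
      rw [h1, ContinuousLinearMap.zero_apply] at h2
      linarith [h2]
    have e2 : ∀ x : V, S.eta p (fderiv ℝ S.xi p x)
        = - fderiv ℝ (fun q => S.eta q (S.xi p)) p x := by
      intro x
      have h0 : (fun q => S.eta q (S.xi q)) =ᶠ[nhds p] (fun _ => (1:ℝ)) := by
        filter_upwards [hs.mem_nhds hp] with q hq; exact S.eta_xi q hq
      have h1 : fderiv ℝ (fun q => S.eta q (S.xi q)) p = 0 := by
        rw [h0.fderiv_eq]; exact fderiv_const_apply _
      have h2 := (fam1 hs hp S.eta (etad S hs hp) S.lin_eta (xid S hs hp)).2 x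
      rw [h1, ContinuousLinearMap.zero_apply] at h2
      linarith [h2]
    unfold lieXiPhi
    rw [eta_addl S hp, eta_subl S hp, eta_phi S hp]
    rw [e1 (S.xi p), e2 (S.phi p v)]
    have hde := hAK.deta p hp (S.xi p) (S.phi p v)
    unfold dEta at hde
    linarith
  have hker := ker_phi S hp hL
  rw [hker, heta, zero_smul]

lemma hpr_zero (S : ACM s) (hs : IsOpen s) (hp : p ∈ s) (hAK : IsAK s S α)
    (hN : IsNormal s S) (u : V) : hpr α S.phi S.xi p u = 0 := by
  unfold hpr
  rw [lie_zero S hs hp hAK hN, smul_zero]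

/-- `∇η` via `∇ξ`. -/
lemma fderiv_eta_eq (S : ACM s) (hs : IsOpen s) (hp : p ∈ s)
    (hΓ : IsLeviCivitaOn s S.g Γ) (x y : V) :
    fderiv ℝ (fun q => S.eta q y) p x
      = S.eta p (Γ p x y) + S.g p (cov Γ S.xi p x) y := by
  have heq : (fun q => S.eta q y) =ᶠ[nhds p] (fun q => S.g q y (S.xi q)) := by
    filter_upwards [hs.mem_nhds hp] with q hq; exact eta_eq_g_xi S hq y
  have hf := (fam2 hs hp S.g (gd S hs hp) S.metric.2.2.1 (g_lin2 S)
    (differentiableAt_const y) (xid S hs hp)).2 x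
  rw [heq.fderiv_eq, hf]
  rw [fderiv_const_apply, ContinuousLinearMap.zero_apply, g_zerol S hp, add_zero]
  rw [hΓ.2.2 p hp x y (S.xi p)]
  unfold cov
  rw [g_addl S hp, ← eta_eq_g_xi S hp, g_symm S hp y (Γ p x (S.xi p)),
    g_symm S hp y (fderiv ℝ S.xi p x)]
  ring

/-- symmetry of `∇ξ`. -/
lemma cov_xi_symm (S : ACM s) (hs : IsOpen s) (hp : p ∈ s) (hAK : IsAK s S α)
    (hΓ : IsLeviCivitaOn s S.g Γ) (x y : V) :
    S.g p (cov Γ S.xi p x) y = S.g p (cov Γ S.xi p y) x := by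
  have h1 := fderiv_eta_eq S hs hp hΓ x y
  have h2 := fderiv_eta_eq S hs hp hΓ y x
  have hde := hAK.deta p hp x y
  unfold dEta at hde
  have hsym : Γ p x y = Γ p y x := hΓ.2.1 p hp x y
  rw [h1, h2, hsym] at hde
  linarith

/-- `g(∇_x ξ, ξ) = 0`. -/
lemma cov_xi_orth (S : ACM s) (hs : IsOpen s) (hp : p ∈ s)
    (hΓ : IsLeviCivitaOn s S.g Γ) (x : V) :
    S.g p (cov Γ S.xi p x) (S.xi p) = 0 := by
  have h0 : (fun q => S.g q (S.xi q) (S.xi q)) =ᶠ[nhds p] (fun _ => (1:ℝ)) := by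
    filter_upwards [hs.mem_nhds hp] with q hq; exact g_xi_xi S hq
  have h1 : fderiv ℝ (fun q => S.g q (S.xi q) (S.xi q)) p = 0 := by
    rw [h0.fderiv_eq]; exact fderiv_const_apply _
  have hf := (fam2 hs hp S.g (gd S hs hp) S.metric.2.2.1 (g_lin2 S)
    (xid S hs hp) (xid S hs hp)).2 x
  rw [h1, ContinuousLinearMap.zero_apply] at hf
  rw [hΓ.2.2 p hp x (S.xi p) (S.xi p)] at hf
  unfold cov
  rw [g_addl S hp]
  have hsg : S.g p (S.xi p) (fderiv ℝ S.xi p x) = S.g p (fderiv ℝ S.xi p x) (S.xi p) :=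
    g_symm S hp _ _
  have hsg2 : S.g p (S.xi p) (Γ p x (S.xi p)) = S.g p (Γ p x (S.xi p)) (S.xi p) :=
    g_symm S hp _ _
  rw [hsg, hsg2] at hf
  linarith

/-- THE key identity: `∇_u ξ = α (u - η(u) ξ)`. -/
lemma cov_xi_eq (S : ACM s) (hs : IsOpen s) (hp : p ∈ s) (hAK : IsAK s S α)
    (hN : IsNormal s S) (hΓ : IsLeviCivitaOn s S.g Γ) (u : V) :
    cov Γ S.xi p u = α • (u - S.eta p u • S.xi p) := by
  -- step 1: g(∇_u ξ, φ v) = α g(u, φ v)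
  have key : ∀ v : V, S.g p (cov Γ S.xi p u) (S.phi p v) = α * S.g p u (S.phi p v) := by
    intro v
    have hdphi := hAK.dphi p hp (S.xi p) u v
    have hP0 : ∀ w : V, FPhi S p (S.xi p) w = 0 := by
      intro w
      unfold FPhi
      rw [g_symm S hp, ← eta_eq_g_xi S hp, eta_phi S hp]
    have hdP : ∀ x w : V, fderiv ℝ (fun q => FPhi S q (S.xi p) w) p x
        = - S.g p (fderiv ℝ S.xi p x) (S.phi p w) := by
      intro x w
      have h0 : (fun q => S.g q (S.xi q) (S.phi q w)) =ᶠ[nhds p] (fun _ => (0:ℝ)) := by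
        filter_upwards [hs.mem_nhds hp] with q hq
        rw [g_symm S hq, ← eta_eq_g_xi S hq, eta_phi S hq]
      have h1 : fderiv ℝ (fun q => S.g q (S.xi q) (S.phi q w)) p = 0 := by
        rw [h0.fderiv_eq]; exact fderiv_const_apply _
      have hf := (fam2 hs hp S.g (gd S hs hp) S.metric.2.2.1 (g_lin2 S)
        (xid S hs hp) (phid S hs hp w)).2 x
      rw [h1, ContinuousLinearMap.zero_apply] at hf
      have hf2 := (fam2 hs hp S.g (gd S hs hp) S.metric.2.2.1 (g_lin2 S)
        (differentiableAt_const (S.xi p)) (phid S hs hp w)).2 x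
      rw [fderiv_const_apply, ContinuousLinearMap.zero_apply, g_zerol S hp, add_zero] at hf2
      unfold FPhi
      rw [hf2]
      linarith [hf]
    rw [hP0 u, hP0 v, S.eta_xi p hp, hdP u v, hdP v u] at hdphi
    have hf3 := (fam2 hs hp S.g (gd S hs hp) S.metric.2.2.1 (g_lin2 S)
      (differentiableAt_const u) (phid S hs hp v)).2 (S.xi p)
    rw [fderiv_const_apply, ContinuousLinearMap.zero_apply, g_zerol S hp, add_zero] at hf3
    have hf3' : fderiv ℝ (fun q => FPhi S q u v) p (S.xi p)
        = fderiv ℝ (fun q => S.g q u (S.phi p v)) p (S.xi p)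
          + S.g p u (fderiv ℝ (fun q => S.phi q v) p (S.xi p)) := by
      unfold FPhi; rw [hf3]
    have e_compat : fderiv ℝ (fun q => S.g q u (S.phi p v)) p (S.xi p)
        = S.g p (Γ p (S.xi p) u) (S.phi p v) + S.g p u (Γ p (S.xi p) (S.phi p v)) :=
      hΓ.2.2 p hp (S.xi p) u (S.phi p v)
    have hlie := lie_zero S hs hp hAK hN v
    unfold lieXiPhi at hlie
    have hDv : fderiv ℝ (fun q => S.phi q v) p (S.xi p)
        = fderiv ℝ S.xi p (S.phi p v) - S.phi p (fderiv ℝ S.xi p v) := by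
      calc fderiv ℝ (fun q => S.phi q v) p (S.xi p)
          = (fderiv ℝ (fun q => S.phi q v) p (S.xi p) - fderiv ℝ S.xi p (S.phi p v)
              + S.phi p (fderiv ℝ S.xi p v))
            + (fderiv ℝ S.xi p (S.phi p v) - S.phi p (fderiv ℝ S.xi p v)) := by module
        _ = _ := by rw [hlie, zero_add]
    have e_D : S.g p u (fderiv ℝ (fun q => S.phi q v) p (S.xi p))
        = S.g p u (fderiv ℝ S.xi p (S.phi p v)) - S.g p u (S.phi p (fderiv ℝ S.xi p v)) := by
      rw [hDv, g_subr S hp]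
    have s1 : S.g p (cov Γ S.xi p u) (S.phi p v)
        = S.g p (fderiv ℝ S.xi p u) (S.phi p v) + S.g p (Γ p u (S.xi p)) (S.phi p v) := by
      unfold cov; rw [g_addl S hp]
    have s2 : S.g p u (cov Γ S.xi p (S.phi p v))
        = S.g p u (fderiv ℝ S.xi p (S.phi p v)) + S.g p u (Γ p (S.phi p v) (S.xi p)) := by
      unfold cov; rw [g_addr S hp]
    have s3 : S.g p (Γ p (S.xi p) u) (S.phi p v)
        = S.g p (Γ p u (S.xi p)) (S.phi p v) := by rw [hΓ.2.1 p hp (S.xi p) u]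
    have s4 : S.g p u (Γ p (S.xi p) (S.phi p v))
        = S.g p u (Γ p (S.phi p v) (S.xi p)) := by rw [hΓ.2.1 p hp (S.xi p) (S.phi p v)]
    have s5 : S.g p u (S.phi p (fderiv ℝ S.xi p v))
        = - S.g p (fderiv ℝ S.xi p v) (S.phi p u) := by
      rw [g_symm S hp, g_phi_skew S hp]
    have hΦ : FPhi S p u v = S.g p u (S.phi p v) := rfl
    have hcov2 : S.g p (cov Γ S.xi p u) (S.phi p v)
        + S.g p u (cov Γ S.xi p (S.phi p v)) = 2 * α * S.g p u (S.phi p v) := by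
      linear_combination s1 + s2 + hdphi - hf3' - e_compat - e_D + s5 - s3 - s4
        + 2 * α * hΦ
    have hsymcov : S.g p u (cov Γ S.xi p (S.phi p v))
        = S.g p (cov Γ S.xi p u) (S.phi p v) := by
      rw [g_symm S hp, cov_xi_symm S hs hp hAK hΓ (S.phi p v) u]
    rw [hsymcov] at hcov2
    linarith
  -- step 2: g(∇_u ξ, w) = α (g(u,w) - η(u) η(w)) for all w
  have key2 : ∀ w : V, S.g p (cov Γ S.xi p u) w
      = α * (S.g p u w - S.eta p u * S.eta p w) := by
    intro w
    have hw : w = S.eta p w • S.xi p - S.phi p (S.phi p w) := by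
      have := S.phi_sq p hp w
      calc w = -(-w + S.eta p w • S.xi p) + S.eta p w • S.xi p := by module
        _ = _ := by rw [← this]; module
    have h1 : S.g p (cov Γ S.xi p u) w
        = S.eta p w * S.g p (cov Γ S.xi p u) (S.xi p)
          - S.g p (cov Γ S.xi p u) (S.phi p (S.phi p w)) := by
      conv_lhs => rw [hw]
      rw [g_subr S hp, g_smulr S hp]
    rw [cov_xi_orth S hs hp hΓ, mul_zero, zero_sub] at h1
    rw [key (S.phi p w)] at h1
    rw [S.phi_sq p hp w, g_addr S hp, g_negr S hp, g_smulr S hp] at h1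
    rw [← eta_eq_g_xi S hp] at h1
    rw [h1]; ring
  -- step 3: nondegeneracy
  have hz : ∀ w : V, S.g p (cov Γ S.xi p u - α • (u - S.eta p u • S.xi p)) w = 0 := by
    intro w
    rw [g_subl S hp, key2 w, g_smull S hp, g_subl S hp, g_smull S hp,
      g_symm S hp (S.xi p) w, ← eta_eq_g_xi S hp]
    ring
  have := g_nondeg S hp hz
  exact sub_eq_zero.mp this

end PartB


section PartC
variable {V : Type*} [NormedAddCommGroup V] [NormedSpace ℝ V] [FiniteDimensional ℝ V]
variable {s : Set V} {S : ACM s} {p : V} {α : ℝ} {Γ : V → V → V → V}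

/-- The canonical connection in simplified (h' = 0) form. -/
def Ghat (S : ACM s) (α : ℝ) (Γ : V → V → V → V) : V → V → V → V :=
  fun p u v => Γ p u v + (α * S.g p u v) • S.xi p - (α * S.eta p v) • u

lemma canonical_eq_Ghat (S : ACM s) (hs : IsOpen s) (hAK : IsAK s S α)
    (hN : IsNormal s S) (hp : p ∈ s) (u v : V) :
    canonical α S Γ p u v = Ghat S α Γ p u v := by
  unfold canonical Ghat
  rw [hpr_zero S hs hp hAK hN, add_zero]

lemma Ghat_smooth (S : ACM s) (hΓ : IsConnectionOn s Γ) (u v : V) :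
    ContDiffOn ℝ (⊤ : ℕ∞) (fun q => Ghat S α Γ q u v) s := by
  unfold Ghat
  exact ((hΓ.1 u v).add (((S.metric.1 u v).const_smul α).smul S.smooth_xi)).sub
    (((S.smooth_eta v).const_smul α).smul contDiffOn_const)

lemma Ghat_d (S : ACM s) (hs : IsOpen s) (hp : p ∈ s) (hΓ : IsConnectionOn s Γ)
    (u v : V) : DifferentiableAt ℝ (fun q => Ghat S α Γ q u v) p :=
  diffAt_of_contDiffOn hs hp (Ghat_smooth S hΓ u v)

lemma Ghat_lin1 (S : ACM s) (hΓ : IsConnectionOn s Γ) :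
    ∀ q ∈ s, ∀ v : V, IsLinearMap ℝ (fun u => Ghat S α Γ q u v) := by
  intro q hq v
  constructor
  · intro a b
    unfold Ghat
    rw [(hΓ.2.1 q hq v).1 a b, g_addl S hq]
    module
  · intro t a
    unfold Ghat
    rw [(hΓ.2.1 q hq v).2 t a, g_smull S hq]
    module

lemma Ghat_lin2 (S : ACM s) (hΓ : IsConnectionOn s Γ) :
    ∀ q ∈ s, ∀ u : V, IsLinearMap ℝ (fun v => Ghat S α Γ q u v) := by
  intro q hq u
  constructor
  · intro a b
    unfold Ghat
    rw [(hΓ.2.2 q hq u).1 a b, g_addr S hq, eta_addl S hq]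
    module
  · intro t a
    unfold Ghat
    rw [(hΓ.2.2 q hq u).2 t a, g_smulr S hq, eta_smull S hq]
    module

lemma Ghat_con (S : ACM s) (hΓ : IsConnectionOn s Γ) :
    IsConnectionOn s (Ghat S α Γ) :=
  ⟨fun u v => Ghat_smooth S hΓ u v, Ghat_lin1 S hΓ, Ghat_lin2 S hΓ⟩

/-- `Ghat` is a metric connection. -/
lemma Ghat_metric (S : ACM s) (hs : IsOpen s) (hp : p ∈ s)
    (hΓ : IsLeviCivitaOn s S.g Γ) (x v w : V) :
    fderiv ℝ (fun q => S.g q v w) p x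
      = S.g p (Ghat S α Γ p x v) w + S.g p v (Ghat S α Γ p x w) := by
  have h1 : S.g p (Ghat S α Γ p x v) w
      = S.g p (Γ p x v) w + (α * S.g p x v) * S.eta p w - (α * S.eta p v) * S.g p x w := by
    unfold Ghat
    rw [g_subl S hp, g_addl S hp, g_smull S hp, g_smull S hp,
      g_symm S hp (S.xi p) w, ← eta_eq_g_xi S hp w]
  have h2 : S.g p v (Ghat S α Γ p x w)
      = S.g p v (Γ p x w) + (α * S.g p x w) * S.eta p v - (α * S.eta p w) * S.g p v x := by
    unfold Ghat
    rw [g_subr S hp, g_addr S hp, g_smulr S hp, g_smulr S hp, ← eta_eq_g_xi S hp v]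
  rw [h1, h2, hΓ.2.2 p hp x v w, g_symm S hp v x]
  ring

/-- `η` is `Ghat`-parallel : `η(Ghat x u) = ∂_x η(u)`. -/
lemma Ghat_eta (S : ACM s) (hs : IsOpen s) (hp : p ∈ s) (hAK : IsAK s S α)
    (hN : IsNormal s S) (hΓ : IsLeviCivitaOn s S.g Γ) (x u : V) :
    S.eta p (Ghat S α Γ p x u) = fderiv ℝ (fun q => S.eta q u) p x := by
  rw [fderiv_eta_eq S hs hp hΓ x u, cov_xi_eq S hs hp hAK hN hΓ x]
  have h1 : S.eta p (Ghat S α Γ p x u)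
      = S.eta p (Γ p x u) + (α * S.g p x u) * 1 - (α * S.eta p u) * S.eta p x := by
    unfold Ghat
    rw [eta_subl S hp, eta_addl S hp, eta_smull S hp, eta_smull S hp, S.eta_xi p hp]
  have h2 : S.g p (α • (x - S.eta p x • S.xi p)) u
      = α * (S.g p x u - S.eta p x * S.eta p u) := by
    rw [g_smull S hp, g_subl S hp, g_smull S hp, g_symm S hp (S.xi p) u,
      ← eta_eq_g_xi S hp u]
  rw [h1, h2]
  ring

/-- ∇̃ξ = 0 : `Ghat p x ξ = -∂ξ x` would be cov; stated as cov form. -/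
lemma Ghat_cov_xi (S : ACM s) (hs : IsOpen s) (hp : p ∈ s) (hAK : IsAK s S α)
    (hN : IsNormal s S) (hΓ : IsLeviCivitaOn s S.g Γ) (x : V) :
    cov (Ghat S α Γ) S.xi p x = 0 := by
  unfold cov
  have h1 : Ghat S α Γ p x (S.xi p)
      = Γ p x (S.xi p) + (α * S.eta p x) • S.xi p - α • x := by
    unfold Ghat
    rw [S.eta_xi p hp, ← eta_eq_g_xi S hp x]
    module
  rw [h1]
  have h2 : fderiv ℝ S.xi p x = cov Γ S.xi p x - Γ p x (S.xi p) := by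
    unfold cov; module
  rw [h2, cov_xi_eq S hs hp hAK hN hΓ x]
  module

-- derivative expansion helpers for a connection family
variable {Γ' : V → V → V → V}

lemma DΓ_addr (hs : IsOpen s) (hp : p ∈ s) (hcon : IsConnectionOn s Γ')
    (x v w w' : V) :
    fderiv ℝ (fun q => Γ' q v (w + w')) p x
      = fderiv ℝ (fun q => Γ' q v w) p x + fderiv ℝ (fun q => Γ' q v w') p x := by
  have heq : (fun q => Γ' q v (w + w')) =ᶠ[nhds p] (fun q => Γ' q v w + Γ' q v w') := by
    filter_upwards [hs.mem_nhds hp] with q hq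
    exact (hcon.2.2 q hq v).1 w w'
  rw [heq.fderiv_eq, fderiv_fun_add (diffAt_of_contDiffOn hs hp (hcon.1 v w))
    (diffAt_of_contDiffOn hs hp (hcon.1 v w'))]
  simp

lemma DΓ_smulr (hs : IsOpen s) (hp : p ∈ s) (hcon : IsConnectionOn s Γ')
    (x v : V) (t : ℝ) (w : V) :
    fderiv ℝ (fun q => Γ' q v (t • w)) p x = t • fderiv ℝ (fun q => Γ' q v w) p x := by
  have heq : (fun q => Γ' q v (t • w)) =ᶠ[nhds p] (fun q => t • Γ' q v w) := by
    filter_upwards [hs.mem_nhds hp] with q hq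
    exact (hcon.2.2 q hq v).2 t w
  rw [heq.fderiv_eq, fderiv_fun_const_smul (diffAt_of_contDiffOn hs hp (hcon.1 v w))]
  simp

lemma DΓ_addm (hs : IsOpen s) (hp : p ∈ s) (hcon : IsConnectionOn s Γ')
    (x v v' w : V) :
    fderiv ℝ (fun q => Γ' q (v + v') w) p x
      = fderiv ℝ (fun q => Γ' q v w) p x + fderiv ℝ (fun q => Γ' q v' w) p x := by
  have heq : (fun q => Γ' q (v + v') w) =ᶠ[nhds p] (fun q => Γ' q v w + Γ' q v' w) := by
    filter_upwards [hs.mem_nhds hp] with q hq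
    exact (hcon.2.1 q hq w).1 v v'
  rw [heq.fderiv_eq, fderiv_fun_add (diffAt_of_contDiffOn hs hp (hcon.1 v w))
    (diffAt_of_contDiffOn hs hp (hcon.1 v' w))]
  simp

lemma DΓ_smulm (hs : IsOpen s) (hp : p ∈ s) (hcon : IsConnectionOn s Γ')
    (x : V) (t : ℝ) (v w : V) :
    fderiv ℝ (fun q => Γ' q (t • v) w) p x = t • fderiv ℝ (fun q => Γ' q v w) p x := by
  have heq : (fun q => Γ' q (t • v) w) =ᶠ[nhds p] (fun q => t • Γ' q v w) := by
    filter_upwards [hs.mem_nhds hp] with q hq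
    exact (hcon.2.1 q hq w).2 t v
  rw [heq.fderiv_eq, fderiv_fun_const_smul (diffAt_of_contDiffOn hs hp (hcon.1 v w))]
  simp

/-- congruence of curvature under pointwise equality of connections on `s`. -/
lemma Rm_congr {Γ₁ Γ₂ : V → V → V → V} (hs : IsOpen s)
    (h : ∀ q ∈ s, ∀ u v : V, Γ₁ q u v = Γ₂ q u v) (hp : p ∈ s) (u v w : V) :
    Rm Γ₁ p u v w = Rm Γ₂ p u v w := by
  unfold Rm
  have e1 : (fun q => Γ₁ q v w) =ᶠ[nhds p] (fun q => Γ₂ q v w) := by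
    filter_upwards [hs.mem_nhds hp] with q hq; exact h q hq v w
  have e2 : (fun q => Γ₁ q u w) =ᶠ[nhds p] (fun q => Γ₂ q u w) := by
    filter_upwards [hs.mem_nhds hp] with q hq; exact h q hq u w
  rw [e1.fderiv_eq, e2.fderiv_eq, h p hp u (Γ₁ p v w), h p hp v (Γ₁ p u w),
    h p hp v w, h p hp u w]

lemma covT3_congr {Γ₁ Γ₂ : V → V → V → V} (hs : IsOpen s)
    (h : ∀ q ∈ s, ∀ u v : V, Γ₁ q u v = Γ₂ q u v) (hp : p ∈ s) (x u v w : V) :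
    covT3 Γ₁ (Rm Γ₁) p x u v w = covT3 Γ₂ (Rm Γ₂) p x u v w := by
  unfold covT3
  have e1 : (fun q => Rm Γ₁ q u v w) =ᶠ[nhds p] (fun q => Rm Γ₂ q u v w) := by
    filter_upwards [hs.mem_nhds hp] with q hq
    exact Rm_congr hs h hq u v w
  rw [e1.fderiv_eq, h p hp x (Rm Γ₁ p u v w), Rm_congr hs h hp u v w,
    Rm_congr hs h hp (Γ₁ p x u) v w, Rm_congr hs h hp u (Γ₁ p x v) w,
    Rm_congr hs h hp u v (Γ₁ p x w), h p hp x u, h p hp x v, h p hp x w]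

/-- `Rm` is linear in the last argument. -/
lemma Rm_addr (hs : IsOpen s) (hp : p ∈ s) (hcon : IsConnectionOn s Γ') (u v w w' : V) :
    Rm Γ' p u v (w + w') = Rm Γ' p u v w + Rm Γ' p u v w' := by
  unfold Rm
  rw [DΓ_addr hs hp hcon u v w w', DΓ_addr hs hp hcon v u w w',
    (hcon.2.2 p hp v).1 w w', (hcon.2.2 p hp u).1 w w',
    (hcon.2.2 p hp u).1 (Γ' p v w) (Γ' p v w'), (hcon.2.2 p hp v).1 (Γ' p u w) (Γ' p u w')]
  module

lemma Rm_smulr (hs : IsOpen s) (hp : p ∈ s) (hcon : IsConnectionOn s Γ') (u v : V)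
    (t : ℝ) (w : V) : Rm Γ' p u v (t • w) = t • Rm Γ' p u v w := by
  unfold Rm
  rw [DΓ_smulr hs hp hcon u v t w, DΓ_smulr hs hp hcon v u t w,
    (hcon.2.2 p hp v).2 t w, (hcon.2.2 p hp u).2 t w,
    (hcon.2.2 p hp u).2 t (Γ' p v w), (hcon.2.2 p hp v).2 t (Γ' p u w)]
  module

/-- `Rm` is linear in the first argument. -/
lemma Rm_addl (hs : IsOpen s) (hp : p ∈ s) (hcon : IsConnectionOn s Γ') (u u' v w : V) :
    Rm Γ' p (u + u') v w = Rm Γ' p u v w + Rm Γ' p u' v w := by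
  unfold Rm
  rw [DΓ_addm hs hp hcon v u u' w, (hcon.2.1 p hp (Γ' p v w)).1 u u',
    (fderiv ℝ (fun q => Γ' q v w) p).map_add, (hcon.2.1 p hp w).1 u u',
    (hcon.2.2 p hp v).1 (Γ' p u w) (Γ' p u' w)]
  module

lemma Rm_smull (hs : IsOpen s) (hp : p ∈ s) (hcon : IsConnectionOn s Γ') (t : ℝ)
    (u v w : V) : Rm Γ' p (t • u) v w = t • Rm Γ' p u v w := by
  unfold Rm
  rw [DΓ_smulm hs hp hcon v t u w, (hcon.2.1 p hp (Γ' p v w)).2 t u,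
    (fderiv ℝ (fun q => Γ' q v w) p).map_smul, (hcon.2.1 p hp w).2 t u,
    (hcon.2.2 p hp v).2 t (Γ' p u w)]
  module

/-- antisymmetry of `Rm` in the first two arguments. -/
lemma Rm_antisym12 (Γ'' : V → V → V → V) (p u v w : V) :
    Rm Γ'' p u v w = - Rm Γ'' p v u w := by
  unfold Rm; module

end PartC


section PartD
variable {V : Type*} [NormedAddCommGroup V] [NormedSpace ℝ V] [FiniteDimensional ℝ V]
variable {W : Type*} [NormedAddCommGroup W] [NormedSpace ℝ W]
variable {s : Set V} {S : ACM s} {p : V} {α : ℝ} {Γ : V → V → V → V}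

lemma contDiffOn_fderiv {f : V → W} (hs : IsOpen s) (hf : ContDiffOn ℝ (⊤ : ℕ∞) f s) :
    ContDiffOn ℝ (⊤ : ℕ∞) (fderiv ℝ f) s :=
  hf.fderiv_of_isOpen hs (by exact_mod_cast le_top)

lemma diff_df {f : V → W} (hs : IsOpen s) (hp : p ∈ s)
    (hf : ContDiffOn ℝ (⊤ : ℕ∞) f s) (y : V) :
    DifferentiableAt ℝ (fun q => fderiv ℝ f q y) p := by
  have h1 : DifferentiableAt ℝ (fderiv ℝ f) p :=
    diffAt_of_contDiffOn hs hp (contDiffOn_fderiv hs hf)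
  exact h1.clm_apply (differentiableAt_const y)

lemma fderiv_df {f : V → W} (hs : IsOpen s) (hp : p ∈ s)
    (hf : ContDiffOn ℝ (⊤ : ℕ∞) f s) (x y : V) :
    fderiv ℝ (fun q => fderiv ℝ f q y) p x = fderiv ℝ (fderiv ℝ f) p x y := by
  have h1 : DifferentiableAt ℝ (fderiv ℝ f) p :=
    diffAt_of_contDiffOn hs hp (contDiffOn_fderiv hs hf)
  rw [fderiv_clm_apply h1 (differentiableAt_const y)]
  simp

/-- symmetry of second derivatives. -/
lemma sym_second {f : V → W} (hs : IsOpen s) (hp : p ∈ s)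
    (hf : ContDiffOn ℝ (⊤ : ℕ∞) f s) (x y : V) :
    fderiv ℝ (fun q => fderiv ℝ f q y) p x = fderiv ℝ (fun q => fderiv ℝ f q x) p y := by
  have h1 : DifferentiableAt ℝ (fderiv ℝ f) p :=
    diffAt_of_contDiffOn hs hp (contDiffOn_fderiv hs hf)
  have hev : ∀ᶠ q in nhds p, HasFDerivAt f (fderiv ℝ f q) q := by
    filter_upwards [hs.mem_nhds hp] with q hq
    exact (diffAt_of_contDiffOn hs hq hf).hasFDerivAt
  have hsym := second_derivative_symmetric_of_eventually hev h1.hasFDerivAt x y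
  rw [fderiv_df hs hp hf x y, fderiv_df hs hp hf y x, hsym]

-- connection linearity helpers
variable {Γ' : V → V → V → V}

lemma conn_addr (hcon : IsConnectionOn s Γ') (hp : p ∈ s) (u v w : V) :
    Γ' p u (v + w) = Γ' p u v + Γ' p u w := (hcon.2.2 p hp u).1 v w
lemma conn_smulr (hcon : IsConnectionOn s Γ') (hp : p ∈ s) (u : V) (t : ℝ) (v : V) :
    Γ' p u (t • v) = t • Γ' p u v := (hcon.2.2 p hp u).2 t v
lemma conn_subr (hcon : IsConnectionOn s Γ') (hp : p ∈ s) (u v w : V) :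
    Γ' p u (v - w) = Γ' p u v - Γ' p u w :=
  (IsLinearMap.mk' _ (hcon.2.2 p hp u)).map_sub v w
lemma conn_zeror (hcon : IsConnectionOn s Γ') (hp : p ∈ s) (u : V) :
    Γ' p u 0 = 0 := (IsLinearMap.mk' _ (hcon.2.2 p hp u)).map_zero
lemma conn_addl (hcon : IsConnectionOn s Γ') (hp : p ∈ s) (u v w : V) :
    Γ' p (u + v) w = Γ' p u w + Γ' p v w := (hcon.2.1 p hp w).1 u v
lemma conn_smull (hcon : IsConnectionOn s Γ') (hp : p ∈ s) (t : ℝ) (u w : V) :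
    Γ' p (t • u) w = t • Γ' p u w := (hcon.2.1 p hp w).2 t u
lemma conn_subl (hcon : IsConnectionOn s Γ') (hp : p ∈ s) (u v w : V) :
    Γ' p (u - v) w = Γ' p u w - Γ' p v w :=
  (IsLinearMap.mk' _ (hcon.2.1 p hp w)).map_sub u v

/-- `∂ξ` in terms of the structure. -/
lemma hdxi (S : ACM s) (hs : IsOpen s) (hp : p ∈ s) (hAK : IsAK s S α)
    (hN : IsNormal s S) (hΓ : IsLeviCivitaOn s S.g Γ) (x : V) :
    fderiv ℝ S.xi p x = α • (x - S.eta p x • S.xi p) - Γ p x (S.xi p) := by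
  have h := cov_xi_eq S hs hp hAK hN hΓ x
  unfold cov at h
  linear_combination (norm := module) h

/-- K5 : `R(u,v)ξ = α² (η(u) v - η(v) u)`. -/
lemma Rm_xi (S : ACM s) (hs : IsOpen s) (hp : p ∈ s) (hAK : IsAK s S α)
    (hN : IsNormal s S) (hΓ : IsLeviCivitaOn s S.g Γ) (u v : V) :
    Rm Γ p u v (S.xi p) = (α^2) • (S.eta p u • v - S.eta p v • u) := by
  have hcon := hΓ.1
  have E : ∀ x y : V,
      fderiv ℝ (fun q => fderiv ℝ S.xi q y) p x
        + (fderiv ℝ (fun q => Γ q y (S.xi p)) p x + Γ p y (fderiv ℝ S.xi p x))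
      = - (α • (S.eta p y • fderiv ℝ S.xi p x
            + fderiv ℝ (fun q => S.eta q y) p x • S.xi p)) := by
    intro x y
    have hpair := fam1 hs hp (fun q z => Γ q y z) (fun z => Γd hcon hs hp y z)
      (fun q hq => hcon.2.2 q hq y) (xid S hs hp)
    have heq : (fun q => fderiv ℝ S.xi q y + Γ q y (S.xi q)) =ᶠ[nhds p]
        (fun q => α • y - α • (S.eta q y • S.xi q)) := by
      filter_upwards [hs.mem_nhds hp] with q hq
      have h := cov_xi_eq S hs hq hAK hN hΓ y
      unfold cov at h
      calc fderiv ℝ S.xi q y + Γ q y (S.xi q) = α • (y - S.eta q y • S.xi q) := h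
        _ = α • y - α • (S.eta q y • S.xi q) := by module
    have hd1 : DifferentiableAt ℝ (fun q => fderiv ℝ S.xi q y) p :=
      diff_df hs hp S.smooth_xi y
    have hL : fderiv ℝ (fun q => fderiv ℝ S.xi q y + Γ q y (S.xi q)) p x
        = fderiv ℝ (fun q => fderiv ℝ S.xi q y) p x
          + (fderiv ℝ (fun q => Γ q y (S.xi p)) p x + Γ p y (fderiv ℝ S.xi p x)) := by
      rw [fderiv_fun_add hd1 hpair.1]
      rw [ContinuousLinearMap.add_apply]
      rw [hpair.2 x]
    have hsm : DifferentiableAt ℝ (fun q => S.eta q y • S.xi q) p :=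
      (etad S hs hp y).smul (xid S hs hp)
    have hR : fderiv ℝ (fun q => α • y - α • (S.eta q y • S.xi q)) p x
        = - (α • (S.eta p y • fderiv ℝ S.xi p x
            + fderiv ℝ (fun q => S.eta q y) p x • S.xi p)) := by
      rw [fderiv_fun_sub (differentiableAt_const (α • y)) (hsm.fun_const_smul α)]
      rw [ContinuousLinearMap.sub_apply]
      rw [fderiv_const_apply, ContinuousLinearMap.zero_apply]
      rw [fderiv_fun_const_smul hsm]
      rw [ContinuousLinearMap.smul_apply]
      rw [fderiv_fun_smul (etad S hs hp y) (xid S hs hp)]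
      rw [ContinuousLinearMap.add_apply, ContinuousLinearMap.smul_apply,
        ContinuousLinearMap.smulRight_apply]
      module
    rw [← hL, heq.fderiv_eq, hR]
  have hsymD := sym_second hs hp S.smooth_xi u v
  have hesymv : fderiv ℝ (fun q => S.eta q v) p u • S.xi p
      = fderiv ℝ (fun q => S.eta q u) p v • S.xi p := by
    have h := hAK.deta p hp u v
    unfold dEta at h
    have : fderiv ℝ (fun q => S.eta q v) p u = fderiv ℝ (fun q => S.eta q u) p v := by
      linarith
    rw [this]
  have hGd : ∀ y x : V, Γ p y (fderiv ℝ S.xi p x)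
      = α • (Γ p y x - S.eta p x • Γ p y (S.xi p)) - Γ p y (Γ p x (S.xi p)) := by
    intro y x
    rw [hdxi S hs hp hAK hN hΓ x, conn_subr hcon hp, conn_smulr hcon hp,
      conn_subr hcon hp, conn_smulr hcon hp]
  have hΓsym : Γ p u v = Γ p v u := hΓ.2.1 p hp u v
  unfold Rm
  linear_combination (norm := module) (E u v) - (E v u) - hsymD - α • hesymv
    - hGd v u + hGd u v + α • hΓsym
    + (-(α * S.eta p v)) • hdxi S hs hp hAK hN hΓ u
    + (α * S.eta p u) • hdxi S hs hp hAK hN hΓ v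

end PartD


section PartE
variable {V : Type*} [NormedAddCommGroup V] [NormedSpace ℝ V] [FiniteDimensional ℝ V]
variable {s : Set V} {S : ACM s} {p : V} {α : ℝ} {Γ : V → V → V → V}

lemma eta_deriv (S : ACM s) (hs : IsOpen s) (hp : p ∈ s) (hAK : IsAK s S α)
    (hN : IsNormal s S) (hΓ : IsLeviCivitaOn s S.g Γ) (x w : V) :
    fderiv ℝ (fun q => S.eta q w) p x
      = S.eta p (Γ p x w) + α * (S.g p x w - S.eta p x * S.eta p w) := by
  rw [fderiv_eta_eq S hs hp hΓ x w, cov_xi_eq S hs hp hAK hN hΓ x]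
  rw [g_smull S hp, g_subl S hp, g_smull S hp, g_symm S hp (S.xi p) w,
    ← eta_eq_g_xi S hp w]

/-- derivative of the `Ghat` family. -/
lemma DGhat (S : ACM s) (hs : IsOpen s) (hp : p ∈ s) (hΓ : IsLeviCivitaOn s S.g Γ)
    (x v w : V) :
    fderiv ℝ (fun q => Ghat S α Γ q v w) p x
      = fderiv ℝ (fun q => Γ q v w) p x
        + (α * fderiv ℝ (fun q => S.g q v w) p x) • S.xi p
        + (α * S.g p v w) • fderiv ℝ S.xi p x
        - (α * fderiv ℝ (fun q => S.eta q w) p x) • v := by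
  have hcon := hΓ.1
  have hd1 : DifferentiableAt ℝ (fun q => Γ q v w) p := Γd hcon hs hp v w
  have hdc : DifferentiableAt ℝ (fun q => α * S.g q v w) p :=
    (gd S hs hp v w).const_mul α
  have hd2 : DifferentiableAt ℝ (fun q => (α * S.g q v w) • S.xi q) p :=
    hdc.smul (xid S hs hp)
  have hdc' : DifferentiableAt ℝ (fun q => α * S.eta q w) p :=
    (etad S hs hp w).const_mul α
  have hd3 : DifferentiableAt ℝ (fun q => (α * S.eta q w) • v) p :=
    hdc'.smul (differentiableAt_const v)
  have hsplit : fderiv ℝ (fun q => Ghat S α Γ q v w) p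
      = fderiv ℝ (fun q => Γ q v w + (α * S.g q v w) • S.xi q
          - (α * S.eta q w) • v) p := rfl
  rw [hsplit, fderiv_fun_sub (hd1.fun_add hd2) hd3, fderiv_fun_add hd1 hd2,
    ContinuousLinearMap.sub_apply, ContinuousLinearMap.add_apply]
  rw [fderiv_fun_smul hdc (xid S hs hp), fderiv_fun_smul hdc' (differentiableAt_const v)]
  rw [ContinuousLinearMap.add_apply, ContinuousLinearMap.add_apply,
    ContinuousLinearMap.smul_apply, ContinuousLinearMap.smul_apply,
    ContinuousLinearMap.smulRight_apply, ContinuousLinearMap.smulRight_apply]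
  rw [fderiv_const_mul (gd S hs hp v w) α, fderiv_const_mul (etad S hs hp w) α]
  rw [ContinuousLinearMap.smul_apply, ContinuousLinearMap.smul_apply]
  rw [fderiv_const_apply, ContinuousLinearMap.zero_apply]
  simp only [smul_eq_mul]
  module

/-- expansion of the quadratic `Ghat(Ghat)` term. -/
lemma GhatGhat (S : ACM s) (hs : IsOpen s) (hp : p ∈ s) (hΓ : IsLeviCivitaOn s S.g Γ)
    (u v w : V) :
    Ghat S α Γ p u (Ghat S α Γ p v w)
      = Γ p u (Γ p v w) + (α * S.g p v w) • Γ p u (S.xi p) - (α * S.eta p w) • Γ p u v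
        + (α * (S.g p u (Γ p v w) + (α * S.g p v w) * S.eta p u
            - (α * S.eta p w) * S.g p u v)) • S.xi p
        - (α * (S.eta p (Γ p v w) + α * S.g p v w
            - α * S.eta p w * S.eta p v)) • u := by
  have hcon := hΓ.1
  have hP : Ghat S α Γ p v w
      = Γ p v w + (α * S.g p v w) • S.xi p - (α * S.eta p w) • v := rfl
  have hΓuP : Γ p u (Ghat S α Γ p v w)
      = Γ p u (Γ p v w) + (α * S.g p v w) • Γ p u (S.xi p)
        - (α * S.eta p w) • Γ p u v := by
    rw [hP, conn_subr hcon hp, conn_addr hcon hp, conn_smulr hcon hp, conn_smulr hcon hp]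
  have hguP : S.g p u (Ghat S α Γ p v w)
      = S.g p u (Γ p v w) + (α * S.g p v w) * S.eta p u
        - (α * S.eta p w) * S.g p u v := by
    rw [hP, g_subr S hp, g_addr S hp, g_smulr S hp, g_smulr S hp, ← eta_eq_g_xi S hp u]
  have hetaP : S.eta p (Ghat S α Γ p v w)
      = S.eta p (Γ p v w) + α * S.g p v w - α * S.eta p w * S.eta p v := by
    rw [hP, eta_subl S hp, eta_addl S hp, eta_smull S hp, eta_smull S hp, S.eta_xi p hp]
    ring
  have houter : Ghat S α Γ p u (Ghat S α Γ p v w)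
      = Γ p u (Ghat S α Γ p v w) + (α * S.g p u (Ghat S α Γ p v w)) • S.xi p
        - (α * S.eta p (Ghat S α Γ p v w)) • u := rfl
  rw [houter, hΓuP, hguP, hetaP]

/-- K4 : curvature of the canonical connection. -/
lemma Rm_Ghat (S : ACM s) (hs : IsOpen s) (hp : p ∈ s) (hAK : IsAK s S α)
    (hN : IsNormal s S) (hΓ : IsLeviCivitaOn s S.g Γ) (u v w : V) :
    Rm (Ghat S α Γ) p u v w
      = Rm Γ p u v w + (α^2) • (S.g p v w • u - S.g p u w • v) := by
  have hcon := hΓ.1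
  have H1 := DGhat (α := α) S hs hp hΓ u v w
  have H2 := DGhat (α := α) S hs hp hΓ v u w
  have H3 := GhatGhat (α := α) S hs hp hΓ u v w
  have H4 := GhatGhat (α := α) S hs hp hΓ v u w
  have hΓsym : Γ p u v = Γ p v u := hΓ.2.1 p hp u v
  have hgsym : S.g p u v = S.g p v u := g_symm S hp u v
  -- compat as vector equations along ξ
  have Cg1 : (fderiv ℝ (fun q => S.g q v w) p u) • S.xi p
      = (S.g p (Γ p u v) w + S.g p v (Γ p u w)) • S.xi p := by
    rw [hΓ.2.2 p hp u v w]
  have Cg2 : (fderiv ℝ (fun q => S.g q u w) p v) • S.xi p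
      = (S.g p (Γ p v u) w + S.g p u (Γ p v w)) • S.xi p := by
    rw [hΓ.2.2 p hp v u w]
  have Ce1 : (fderiv ℝ (fun q => S.eta q w) p u) • v
      = (S.eta p (Γ p u w) + α * (S.g p u w - S.eta p u * S.eta p w)) • v := by
    rw [eta_deriv S hs hp hAK hN hΓ u w]
  have Ce2 : (fderiv ℝ (fun q => S.eta q w) p v) • u
      = (S.eta p (Γ p v w) + α * (S.g p v w - S.eta p v * S.eta p w)) • u := by
    rw [eta_deriv S hs hp hAK hN hΓ v w]
  have hgsymv : S.g p u v • S.xi p = S.g p v u • S.xi p := by rw [hgsym]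
  have hA : S.g p (Γ p u v) w • S.xi p = S.g p (Γ p v u) w • S.xi p := by rw [hΓsym]
  have hx1 := hdxi S hs hp hAK hN hΓ u
  have hx2 := hdxi S hs hp hAK hN hΓ v
  unfold Rm
  linear_combination (norm := module) H1 - H2 + H3 - H4
    + (α * S.g p v w) • hx1 - (α * S.g p u w) • hx2
    - α • Ce1 + α • Ce2 + α • Cg1 - α • Cg2
    + α • hA - (α^2 * S.eta p w) • hgsymv - (α * S.eta p w) • hΓsym

end PartE


section PartF
variable {V : Type*} [NormedAddCommGroup V] [NormedSpace ℝ V] [FiniteDimensional ℝ V]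
variable {s : Set V} {S : ACM s} {p : V} {α : ℝ} {Γ : V → V → V → V}
variable {Γ' : V → V → V → V}

lemma Rm_subl (hs : IsOpen s) (hp : p ∈ s) (hcon : IsConnectionOn s Γ') (a b v w : V) :
    Rm Γ' p (a - b) v w = Rm Γ' p a v w - Rm Γ' p b v w := by
  have h1 : a - b = a + (-1 : ℝ) • b := by module
  rw [h1, Rm_addl hs hp hcon, Rm_smull hs hp hcon]
  module

lemma Rm_subr (hs : IsOpen s) (hp : p ∈ s) (hcon : IsConnectionOn s Γ') (u v a b : V) :
    Rm Γ' p u v (a - b) = Rm Γ' p u v a - Rm Γ' p u v b := by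
  have h1 : a - b = a + (-1 : ℝ) • b := by module
  rw [h1, Rm_addr hs hp hcon, Rm_smulr hs hp hcon]
  module

/-- derivative of the curvature family. -/
lemma DRm (hs : IsOpen s) (hp : p ∈ s) (hcon : IsConnectionOn s Γ') (x u v w : V) :
    fderiv ℝ (fun q => Rm Γ' q u v w) p x
      = fderiv ℝ (fun q => fderiv ℝ (fun r => Γ' r v w) q u) p x
        - fderiv ℝ (fun q => fderiv ℝ (fun r => Γ' r u w) q v) p x
        + (fderiv ℝ (fun q => Γ' q u (Γ' p v w)) p x
            + Γ' p u (fderiv ℝ (fun q => Γ' q v w) p x))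
        - (fderiv ℝ (fun q => Γ' q v (Γ' p u w)) p x
            + Γ' p v (fderiv ℝ (fun q => Γ' q u w) p x)) := by
  have hT1 : DifferentiableAt ℝ (fun q => fderiv ℝ (fun r => Γ' r v w) q u) p :=
    diff_df hs hp (hcon.1 v w) u
  have hT2 : DifferentiableAt ℝ (fun q => fderiv ℝ (fun r => Γ' r u w) q v) p :=
    diff_df hs hp (hcon.1 u w) v
  have h3 := fam1 hs hp (fun q z => Γ' q u z) (fun z => Γd hcon hs hp u z)
    (fun q hq => hcon.2.2 q hq u) (Γd hcon hs hp v w)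
  have h4 := fam1 hs hp (fun q z => Γ' q v z) (fun z => Γd hcon hs hp v z)
    (fun q hq => hcon.2.2 q hq v) (Γd hcon hs hp u w)
  have hrfl : fderiv ℝ (fun q => Rm Γ' q u v w) p
      = fderiv ℝ (fun q => fderiv ℝ (fun r => Γ' r v w) q u
          - fderiv ℝ (fun r => Γ' r u w) q v
          + Γ' q u (Γ' q v w) - Γ' q v (Γ' q u w)) p := rfl
  rw [hrfl, fderiv_fun_sub ((hT1.fun_sub hT2).fun_add h3.1) h4.1, fderiv_fun_add (hT1.fun_sub hT2) h3.1,
    fderiv_fun_sub hT1 hT2]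
  rw [ContinuousLinearMap.sub_apply, ContinuousLinearMap.add_apply,
    ContinuousLinearMap.sub_apply]
  rw [h3.2 x, h4.2 x]

/-- expansion of `Γ'(x, Rm(u,v,w))`. -/
lemma GRm (hp : p ∈ s) (hcon : IsConnectionOn s Γ') (x u v w : V) :
    Γ' p x (Rm Γ' p u v w)
      = Γ' p x (fderiv ℝ (fun q => Γ' q v w) p u)
        - Γ' p x (fderiv ℝ (fun q => Γ' q u w) p v)
        + Γ' p x (Γ' p u (Γ' p v w)) - Γ' p x (Γ' p v (Γ' p u w)) := by
  have h1 : Rm Γ' p u v w = fderiv ℝ (fun q => Γ' q v w) p u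
      - fderiv ℝ (fun q => Γ' q u w) p v
      + Γ' p u (Γ' p v w) - Γ' p v (Γ' p u w) := rfl
  rw [h1, conn_subr hcon hp, conn_addr hcon hp, conn_subr hcon hp]

/-- SECOND BIANCHI identity with torsion (constant-vector form). -/
lemma bianchi2 (hs : IsOpen s) (hp : p ∈ s) (hcon : IsConnectionOn s Γ') (x u v w : V) :
    covT3 Γ' (Rm Γ') p x u v w + covT3 Γ' (Rm Γ') p u v x w + covT3 Γ' (Rm Γ') p v x u w
      + Rm Γ' p (Γ' p x u - Γ' p u x) v w + Rm Γ' p (Γ' p u v - Γ' p v u) x w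
      + Rm Γ' p (Γ' p v x - Γ' p x v) u w = 0 := by
  have hsym1 := sym_second hs hp (hcon.1 v w) x u
  have hsym2 := sym_second hs hp (hcon.1 x w) u v
  have hsym3 := sym_second hs hp (hcon.1 u w) v x
  have hD1 := DRm hs hp hcon x u v w
  have hD2 := DRm hs hp hcon u v x w
  have hD3 := DRm hs hp hcon v x u w
  have hG1 := GRm hp hcon x u v w
  have hG2 := GRm hp hcon u v x w
  have hG3 := GRm hp hcon v x u w
  have hS1 := Rm_subl hs hp hcon (Γ' p x u) (Γ' p u x) v w
  have hS2 := Rm_subl hs hp hcon (Γ' p u v) (Γ' p v u) x w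
  have hS3 := Rm_subl hs hp hcon (Γ' p v x) (Γ' p x v) u w
  unfold covT3
  rw [hD1, hD2, hD3, hG1, hG2, hG3, hS1, hS2, hS3]
  unfold Rm
  linear_combination (norm := module) hsym1 + hsym2 + hsym3

/-- skew-symmetry of the curvature of a metric connection. -/
lemma Rm_metric_skew (S : ACM s) (hs : IsOpen s) (hp : p ∈ s)
    (hcon : IsConnectionOn s Γ')
    (hmet : ∀ q ∈ s, ∀ x v w : V, fderiv ℝ (fun r => S.g r v w) q x
      = S.g q (Γ' q x v) w + S.g q v (Γ' q x w))
    (u x v w : V) :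
    S.g p (Rm Γ' p u x v) w + S.g p v (Rm Γ' p u x w) = 0 := by
  -- second-derivative identity P(a,b)
  have P : ∀ a b : V,
      fderiv ℝ (fun q => fderiv ℝ (fun r => S.g r v w) q b) p a
        = S.g p (Γ' p a (Γ' p b v)) w + S.g p (Γ' p b v) (Γ' p a w)
          + S.g p (fderiv ℝ (fun q => Γ' q b v) p a) w
          + S.g p (Γ' p a v) (Γ' p b w) + S.g p v (Γ' p a (Γ' p b w))
          + S.g p v (fderiv ℝ (fun q => Γ' q b w) p a) := by
    intro a b
    have heq : (fun q => fderiv ℝ (fun r => S.g r v w) q b) =ᶠ[nhds p]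
        (fun q => S.g q (Γ' q b v) w + S.g q v (Γ' q b w)) := by
      filter_upwards [hs.mem_nhds hp] with q hq
      exact hmet q hq b v w
    have hf1 := fam2 hs hp S.g (gd S hs hp) S.metric.2.2.1 (g_lin2 S)
      (Γd hcon hs hp b v) (differentiableAt_const w)
    have hf2 := fam2 hs hp S.g (gd S hs hp) S.metric.2.2.1 (g_lin2 S)
      (differentiableAt_const v) (Γd hcon hs hp b w)
    have hL : fderiv ℝ (fun q => S.g q (Γ' q b v) w + S.g q v (Γ' q b w)) p a
        = (fderiv ℝ (fun q => S.g q (Γ' p b v) w) p a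
            + S.g p (fderiv ℝ (fun q => Γ' q b v) p a) w)
          + (fderiv ℝ (fun q => S.g q v (Γ' p b w)) p a
            + S.g p v (fderiv ℝ (fun q => Γ' q b w) p a)) := by
      rw [fderiv_fun_add hf1.1 hf2.1, ContinuousLinearMap.add_apply, hf1.2 a, hf2.2 a]
      rw [fderiv_const_apply, ContinuousLinearMap.zero_apply, g_zeror S hp, add_zero,
        fderiv_const_apply, ContinuousLinearMap.zero_apply, g_zerol S hp, add_zero]
    rw [heq.fderiv_eq, hL, hmet p hp a (Γ' p b v) w, hmet p hp a v (Γ' p b w)]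
    ring
  have hsym := sym_second hs hp (S.metric.1 v w) u x
  have hPux := P u x
  have hPxu := P x u
  -- expand the two curvature pairings
  have hexp1 : S.g p (Rm Γ' p u x v) w
      = S.g p (fderiv ℝ (fun q => Γ' q x v) p u) w
        - S.g p (fderiv ℝ (fun q => Γ' q u v) p x) w
        + S.g p (Γ' p u (Γ' p x v)) w - S.g p (Γ' p x (Γ' p u v)) w := by
    have h1 : Rm Γ' p u x v = fderiv ℝ (fun q => Γ' q x v) p u
        - fderiv ℝ (fun q => Γ' q u v) p x
        + Γ' p u (Γ' p x v) - Γ' p x (Γ' p u v) := rfl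
    rw [h1, g_subl S hp, g_addl S hp, g_subl S hp]
  have hexp2 : S.g p v (Rm Γ' p u x w)
      = S.g p v (fderiv ℝ (fun q => Γ' q x w) p u)
        - S.g p v (fderiv ℝ (fun q => Γ' q u w) p x)
        + S.g p v (Γ' p u (Γ' p x w)) - S.g p v (Γ' p x (Γ' p u w)) := by
    have h1 : Rm Γ' p u x w = fderiv ℝ (fun q => Γ' q x w) p u
        - fderiv ℝ (fun q => Γ' q u w) p x
        + Γ' p u (Γ' p x w) - Γ' p x (Γ' p u w) := rfl
    rw [h1, g_subr S hp, g_addr S hp, g_subr S hp]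
  -- symmetry corrections
  have c1 : S.g p (fderiv ℝ (fun q => Γ' q x v) p u) w
      = S.g p w (fderiv ℝ (fun q => Γ' q x v) p u) := g_symm S hp _ _
  have c2 : S.g p (Γ' p x v) (Γ' p u w) = S.g p (Γ' p u w) (Γ' p x v) := g_symm S hp _ _
  have c3 : S.g p (Γ' p u v) (Γ' p x w) = S.g p (Γ' p x w) (Γ' p u v) := g_symm S hp _ _
  linarith [hsym, hPux, hPxu, hexp1, hexp2, c2, c3]



/-- torsion of `Ghat` at a point of `s`. -/
lemma Ghat_tor (S : ACM s) (hp : p ∈ s) (hΓ : IsLeviCivitaOn s S.g Γ) (b c : V) :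
    Ghat S α Γ p b c - Ghat S α Γ p c b
      = (α * S.eta p b) • c - (α * S.eta p c) • b := by
  have e1 : Ghat S α Γ p b c = Γ p b c + (α * S.g p b c) • S.xi p - (α * S.eta p c) • b := rfl
  have e2 : Ghat S α Γ p c b = Γ p c b + (α * S.g p c b) • S.xi p - (α * S.eta p b) • c := rfl
  rw [e1, e2, hΓ.2.1 p hp c b, g_symm S hp c b]
  module

/-- derivative of the torsion of `Ghat`. -/
lemma Ghat_Dtor (S : ACM s) (hs : IsOpen s) (hp : p ∈ s) (hΓ : IsLeviCivitaOn s S.g Γ) (a b c : V) :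
    fderiv ℝ (fun q => Ghat S α Γ q b c) p a - fderiv ℝ (fun q => Ghat S α Γ q c b) p a
      = (α * fderiv ℝ (fun q => S.eta q b) p a) • c
        - (α * fderiv ℝ (fun q => S.eta q c) p a) • b := by
  have hcon := hΓ.1
  have hd1 := Ghat_d (α := α) S hs hp hcon b c
  have hd2 := Ghat_d (α := α) S hs hp hcon c b
  have hL : fderiv ℝ (fun q => Ghat S α Γ q b c) p a
        - fderiv ℝ (fun q => Ghat S α Γ q c b) p a
      = fderiv ℝ (fun q => Ghat S α Γ q b c - Ghat S α Γ q c b) p a := by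
    rw [fderiv_fun_sub hd1 hd2, ContinuousLinearMap.sub_apply]
  have heq : (fun q => Ghat S α Γ q b c - Ghat S α Γ q c b) =ᶠ[nhds p]
      (fun q => (α * S.eta q b) • c - (α * S.eta q c) • b) := by
    filter_upwards [hs.mem_nhds hp] with q hq
    exact Ghat_tor S hq hΓ b c
  have hdb : DifferentiableAt ℝ (fun q => (α * S.eta q b) • c) p :=
    ((etad S hs hp b).const_mul α).smul (differentiableAt_const c)
  have hdc : DifferentiableAt ℝ (fun q => (α * S.eta q c) • b) p :=
    ((etad S hs hp c).const_mul α).smul (differentiableAt_const b)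
  rw [hL, heq.fderiv_eq, fderiv_fun_sub hdb hdc, ContinuousLinearMap.sub_apply]
  rw [fderiv_fun_smul ((etad S hs hp b).const_mul α) (differentiableAt_const c),
    fderiv_fun_smul ((etad S hs hp c).const_mul α) (differentiableAt_const b)]
  rw [ContinuousLinearMap.add_apply, ContinuousLinearMap.add_apply,
    ContinuousLinearMap.smul_apply, ContinuousLinearMap.smul_apply,
    ContinuousLinearMap.smulRight_apply, ContinuousLinearMap.smulRight_apply,
    fderiv_const_mul (etad S hs hp b) α, fderiv_const_mul (etad S hs hp c) α,
    ContinuousLinearMap.smul_apply, ContinuousLinearMap.smul_apply]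
  simp only [fderiv_const_apply, ContinuousLinearMap.zero_apply, smul_zero, smul_eq_mul]
  module

lemma esym (S : ACM s) (hs : IsOpen s) (hp : p ∈ s) (hAK : IsAK s S α) (a b : V) :
    fderiv ℝ (fun q => S.eta q b) p a = fderiv ℝ (fun q => S.eta q a) p b := by
  have h := hAK.deta p hp a b
  unfold dEta at h
  linarith

/-- FIRST BIANCHI identity for `Ghat`. -/
lemma bianchi1_Ghat (S : ACM s) (hs : IsOpen s) (hp : p ∈ s) (hAK : IsAK s S α)
    (hΓ : IsLeviCivitaOn s S.g Γ) (u v w : V) :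
    Rm (Ghat S α Γ) p u v w + Rm (Ghat S α Γ) p v w u + Rm (Ghat S α Γ) p w u v = 0 := by
  have hcon := hΓ.1
  have hconG := Ghat_con (α := α) S hcon
  have hq : ∀ a b c : V, Ghat S α Γ p a (Ghat S α Γ p b c)
        - Ghat S α Γ p a (Ghat S α Γ p c b)
      = (α * S.eta p b) • Ghat S α Γ p a c - (α * S.eta p c) • Ghat S α Γ p a b := by
    intro a b c
    rw [← conn_subr hconG hp a, Ghat_tor S hp hΓ b c, conn_subr hconG hp a,
      conn_smulr hconG hp a, conn_smulr hconG hp a]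
  have ht1 := Ghat_Dtor (α := α) S hs hp hΓ u v w
  have ht2 := Ghat_Dtor (α := α) S hs hp hΓ v w u
  have ht3 := Ghat_Dtor (α := α) S hs hp hΓ w u v
  have he1 : (α * fderiv ℝ (fun q => S.eta q v) p u) • w
      = (α * fderiv ℝ (fun q => S.eta q u) p v) • w := by rw [esym S hs hp hAK u v]
  have he2 : (α * fderiv ℝ (fun q => S.eta q w) p v) • u
      = (α * fderiv ℝ (fun q => S.eta q v) p w) • u := by rw [esym S hs hp hAK v w]
  have he3 : (α * fderiv ℝ (fun q => S.eta q u) p w) • v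
      = (α * fderiv ℝ (fun q => S.eta q w) p u) • v := by rw [esym S hs hp hAK w u]
  have hto1 := Ghat_tor (α := α) S hp hΓ u w
  have hto2 := Ghat_tor (α := α) S hp hΓ v u
  have hto3 := Ghat_tor (α := α) S hp hΓ w v
  unfold Rm
  linear_combination (norm := module) ht1 + ht2 + ht3 + hq u v w + hq v w u + hq w u v
    + he1 + he2 + he3 + (α * S.eta p v) • hto1 + (α * S.eta p w) • hto2
    + (α * S.eta p u) • hto3

/-- `R̃(u,v)ξ = 0`. -/
lemma Rm_Ghat_xi (S : ACM s) (hs : IsOpen s) (hp : p ∈ s) (hAK : IsAK s S α)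
    (hN : IsNormal s S) (hΓ : IsLeviCivitaOn s S.g Γ) (u v : V) :
    Rm (Ghat S α Γ) p u v (S.xi p) = 0 := by
  rw [Rm_Ghat S hs hp hAK hN hΓ u v (S.xi p), Rm_xi S hs hp hAK hN hΓ u v]
  rw [← eta_eq_g_xi S hp v, ← eta_eq_g_xi S hp u]
  module

/-- PAIR SYMMETRY for the curvature of `Ghat`. -/
lemma Rm_Ghat_pair (S : ACM s) (hs : IsOpen s) (hp : p ∈ s) (hAK : IsAK s S α)
    (hN : IsNormal s S) (hΓ : IsLeviCivitaOn s S.g Γ) (x y z t : V) :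
    S.g p (Rm (Ghat S α Γ) p x y z) t = S.g p (Rm (Ghat S α Γ) p z t x) y := by
  have hcon := hΓ.1
  have hconG := Ghat_con (α := α) S hcon
  have hmet : ∀ q ∈ s, ∀ a v w : V, fderiv ℝ (fun r => S.g r v w) q a
      = S.g q (Ghat S α Γ q a v) w + S.g q v (Ghat S α Γ q a w) :=
    fun q hq a v w => Ghat_metric (α := α) S hs hq hΓ a v w
  -- scalar Bianchi
  have B : ∀ a b c d : V, S.g p (Rm (Ghat S α Γ) p a b c) d
      + S.g p (Rm (Ghat S α Γ) p b c a) d + S.g p (Rm (Ghat S α Γ) p c a b) d = 0 := by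
    intro a b c d
    have h := bianchi1_Ghat S hs hp hAK hΓ a b c
    have h2 : S.g p (Rm (Ghat S α Γ) p a b c + Rm (Ghat S α Γ) p b c a
        + Rm (Ghat S α Γ) p c a b) d = 0 := by rw [h, g_zerol S hp]
    rw [g_addl S hp, g_addl S hp] at h2
    linarith
  -- last-pair skew
  have L : ∀ a b c d : V, S.g p (Rm (Ghat S α Γ) p a b c) d
      = - S.g p (Rm (Ghat S α Γ) p a b d) c := by
    intro a b c d
    have h := Rm_metric_skew S hs hp hconG hmet a b c d
    have h2 : S.g p c (Rm (Ghat S α Γ) p a b d)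
        = S.g p (Rm (Ghat S α Γ) p a b d) c := g_symm S hp _ _
    linarith
  -- first-pair skew
  have F : ∀ a b c d : V, S.g p (Rm (Ghat S α Γ) p a b c) d
      = - S.g p (Rm (Ghat S α Γ) p b a c) d := by
    intro a b c d
    rw [Rm_antisym12 (Ghat S α Γ) p a b c, g_negl S hp]
  linarith [B z x y t, B x y t z, B y t z x, B t z x y, L x y t z, L y t x z,
    F t x y z, L x t y z, L t z y x, L z x t y, L z y t x, F z y x t, F t z x y]
end PartF


section PartG
variable {V : Type*} [NormedAddCommGroup V] [NormedSpace ℝ V] [FiniteDimensional ℝ V]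
variable {s : Set V} {S : ACM s} {p : V} {α : ℝ} {Γ : V → V → V → V}

/-- `R̃(ξ, u)v = 0`. -/
lemma Rm_Ghat_xi_left (S : ACM s) (hs : IsOpen s) (hp : p ∈ s) (hAK : IsAK s S α)
    (hN : IsNormal s S) (hΓ : IsLeviCivitaOn s S.g Γ) (u v : V) :
    Rm (Ghat S α Γ) p (S.xi p) u v = 0 := by
  apply g_nondeg S hp
  intro w
  rw [Rm_Ghat_pair S hs hp hAK hN hΓ (S.xi p) u v w,
    Rm_Ghat_xi S hs hp hAK hN hΓ v w, g_zerol S hp]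

/-- flatness of `Ghat` from `∇̃ R̃ = 0`. -/
lemma Ghat_flat_of_parallel (S : ACM s) (hs : IsOpen s) (hAK : IsAK s S α)
    (hN : IsNormal s S) (hΓ : IsLeviCivitaOn s S.g Γ)
    (hpar : ParallelCurv s (canonical α S Γ)) (hp : p ∈ s) (u v w : V) :
    Rm (Ghat S α Γ) p u v w = 0 := by
  have hcon := hΓ.1
  have hconG := Ghat_con (α := α) S hcon
  have hcanG : ∀ q ∈ s, ∀ a b : V, canonical α S Γ q a b = Ghat S α Γ q a b :=
    fun q hq a b => canonical_eq_Ghat S hs hAK hN hq a b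
  have hcov : ∀ x a b c : V, covT3 (Ghat S α Γ) (Rm (Ghat S α Γ)) p x a b c = 0 :=
    fun x a b c => by
      rw [← covT3_congr hs hcanG hp x a b c]; exact hpar p hp x a b c
  have hb := bianchi2 hs hp hconG (S.xi p) u v w
  rw [hcov (S.xi p) u v w, hcov u v (S.xi p) w, hcov v (S.xi p) u w] at hb
  have h1 : Rm (Ghat S α Γ) p (Ghat S α Γ p (S.xi p) u - Ghat S α Γ p u (S.xi p)) v w
      = α • Rm (Ghat S α Γ) p u v w := by
    rw [Ghat_tor (α := α) S hp hΓ (S.xi p) u, S.eta_xi p hp,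
      Rm_subl hs hp hconG, Rm_smull hs hp hconG, Rm_smull hs hp hconG,
      Rm_Ghat_xi_left S hs hp hAK hN hΓ v w]
    module
  have h2 : Rm (Ghat S α Γ) p (Ghat S α Γ p u v - Ghat S α Γ p v u) (S.xi p) w = 0 := by
    rw [Ghat_tor (α := α) S hp hΓ u v, Rm_subl hs hp hconG,
      Rm_smull hs hp hconG, Rm_smull hs hp hconG]
    rw [Rm_antisym12 (Ghat S α Γ) p v (S.xi p) w,
      Rm_antisym12 (Ghat S α Γ) p u (S.xi p) w,
      Rm_Ghat_xi_left S hs hp hAK hN hΓ v w, Rm_Ghat_xi_left S hs hp hAK hN hΓ u w]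
    module
  have h3 : Rm (Ghat S α Γ) p (Ghat S α Γ p v (S.xi p) - Ghat S α Γ p (S.xi p) v) u w
      = α • Rm (Ghat S α Γ) p u v w := by
    rw [Ghat_tor (α := α) S hp hΓ v (S.xi p), S.eta_xi p hp,
      Rm_subl hs hp hconG, Rm_smull hs hp hconG, Rm_smull hs hp hconG,
      Rm_Ghat_xi_left S hs hp hAK hN hΓ u w,
      Rm_antisym12 (Ghat S α Γ) p v u w]
    module
  rw [h1, h2, h3] at hb
  have hb2 : (2 * α) • Rm (Ghat S α Γ) p u v w = 0 := by
    linear_combination (norm := module) hb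
  rcases smul_eq_zero.mp hb2 with h | h
  · exfalso; have := hAK.pos; nlinarith
  · exact h

/-- a → b. -/
lemma flat_of_parallel (S : ACM s) (hs : IsOpen s) (hAK : IsAK s S α)
    (hN : IsNormal s S) (hΓ : IsLeviCivitaOn s S.g Γ)
    (hpar : ParallelCurv s (canonical α S Γ)) : FlatCurv s (canonical α S Γ) := by
  intro p hp u v w
  have hcanG : ∀ q ∈ s, ∀ a b : V, canonical α S Γ q a b = Ghat S α Γ q a b :=
    fun q hq a b => canonical_eq_Ghat S hs hAK hN hq a b
  rw [Rm_congr hs hcanG hp u v w]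
  exact Ghat_flat_of_parallel S hs hAK hN hΓ hpar hp u v w

/-- b → a. -/
lemma parallel_of_flat (S : ACM s) (hs : IsOpen s) (hAK : IsAK s S α)
    (hN : IsNormal s S) (hΓ : IsLeviCivitaOn s S.g Γ)
    (hfl : FlatCurv s (canonical α S Γ)) : ParallelCurv s (canonical α S Γ) := by
  intro p hp x u v w
  have hcon := hΓ.1
  have hconG := Ghat_con (α := α) S hcon
  have hcanG : ∀ q ∈ s, ∀ a b : V, canonical α S Γ q a b = Ghat S α Γ q a b :=
    fun q hq a b => canonical_eq_Ghat S hs hAK hN hq a b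
  have hR0 : ∀ q ∈ s, ∀ a b c : V, Rm (Ghat S α Γ) q a b c = 0 := by
    intro q hq a b c
    rw [← Rm_congr hs hcanG hq a b c]
    exact hfl q hq a b c
  rw [covT3_congr hs hcanG hp x u v w]
  unfold covT3
  have heq : (fun q => Rm (Ghat S α Γ) q u v w) =ᶠ[nhds p] (fun _ => (0 : V)) := by
    filter_upwards [hs.mem_nhds hp] with q hq
    exact hR0 q hq u v w
  rw [heq.fderiv_eq, fderiv_const_apply, ContinuousLinearMap.zero_apply]
  rw [hR0 p hp u v w, hR0 p hp (Ghat S α Γ p x u) v w, hR0 p hp u (Ghat S α Γ p x v) w,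
    hR0 p hp u v (Ghat S α Γ p x w), conn_zeror hconG hp x]
  module

/-- b ↔ c. -/
lemma flat_iff_const (S : ACM s) (hs : IsOpen s) (hAK : IsAK s S α)
    (hN : IsNormal s S) (hΓ : IsLeviCivitaOn s S.g Γ) :
    FlatCurv s (canonical α S Γ) ↔ ConstCurvOn s S.g Γ (-(α^2)) := by
  have hcanG : ∀ q ∈ s, ∀ a b : V, canonical α S Γ q a b = Ghat S α Γ q a b :=
    fun q hq a b => canonical_eq_Ghat S hs hAK hN hq a b
  constructor
  · intro h p hp u v w
    have h0 := h p hp u v w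
    rw [Rm_congr hs hcanG hp u v w, Rm_Ghat S hs hp hAK hN hΓ u v w] at h0
    linear_combination (norm := module) h0
  · intro h p hp u v w
    rw [Rm_congr hs hcanG hp u v w, Rm_Ghat S hs hp hAK hN hΓ u v w, h p hp u v w]
    module

/-- c → d. -/
lemma locsym_of_const {k : ℝ} (S : ACM s) (hs : IsOpen s)
    (hΓ : IsLeviCivitaOn s S.g Γ) (hc : ConstCurvOn s S.g Γ k) :
    LocallySymmetricOn s Γ := by
  intro p hp x u v w
  have hcon := hΓ.1
  unfold covT3
  have heq : (fun q => Rm Γ q u v w) =ᶠ[nhds p]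
      (fun q => k • (S.g q v w • u - S.g q u w • v)) := by
    filter_upwards [hs.mem_nhds hp] with q hq
    exact hc q hq u v w
  have hd1 : DifferentiableAt ℝ (fun q => S.g q v w • u) p :=
    (gd S hs hp v w).smul_const u
  have hd2 : DifferentiableAt ℝ (fun q => S.g q u w • v) p :=
    (gd S hs hp u w).smul_const v
  have hD : fderiv ℝ (fun q => Rm Γ q u v w) p x
      = k • (fderiv ℝ (fun q => S.g q v w) p x • u
          - fderiv ℝ (fun q => S.g q u w) p x • v) := by
    rw [heq.fderiv_eq, fderiv_fun_const_smul (hd1.fun_sub hd2), ContinuousLinearMap.smul_apply,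
      fderiv_fun_sub hd1 hd2, ContinuousLinearMap.sub_apply,
      fderiv_smul_const (gd S hs hp v w) u, fderiv_smul_const (gd S hs hp u w) v]
    simp only [ContinuousLinearMap.smulRight_apply]
  rw [hD]
  have hcompat1 := hΓ.2.2 p hp x v w
  have hcompat2 := hΓ.2.2 p hp x u w
  have hc1 := hc p hp u v w
  have hc2 := hc p hp (Γ p x u) v w
  have hc3 := hc p hp u (Γ p x v) w
  have hc4 := hc p hp u v (Γ p x w)
  have hG : Γ p x (Rm Γ p u v w)
      = k • (S.g p v w • Γ p x u - S.g p u w • Γ p x v) := by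
    rw [hc1, conn_smulr hcon hp, conn_subr hcon hp, conn_smulr hcon hp,
      conn_smulr hcon hp]
  rw [hG, hc2, hc3, hc4]
  have e1 : fderiv ℝ (fun q => S.g q v w) p x • u
      = (S.g p (Γ p x v) w + S.g p v (Γ p x w)) • u := by rw [hcompat1]
  have e2 : fderiv ℝ (fun q => S.g q u w) p x • v
      = (S.g p (Γ p x u) w + S.g p u (Γ p x w)) • v := by rw [hcompat2]
  linear_combination (norm := module) k • e1 - k • e2

/-- differentiability of the curvature family. -/
lemma Rmd (hs : IsOpen s) (hp : p ∈ s) {Γ' : V → V → V → V}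
    (hcon : IsConnectionOn s Γ') (u v z : V) :
    DifferentiableAt ℝ (fun q => Rm Γ' q u v z) p := by
  have hT1 : DifferentiableAt ℝ (fun q => fderiv ℝ (fun r => Γ' r v z) q u) p :=
    diff_df hs hp (hcon.1 v z) u
  have hT2 : DifferentiableAt ℝ (fun q => fderiv ℝ (fun r => Γ' r u z) q v) p :=
    diff_df hs hp (hcon.1 u z) v
  have h3 := fam1 hs hp (fun q a => Γ' q u a) (fun a => Γd hcon hs hp u a)
    (fun q hq => hcon.2.2 q hq u) (Γd hcon hs hp v z)
  have h4 := fam1 hs hp (fun q a => Γ' q v a) (fun a => Γd hcon hs hp v a)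
    (fun q hq => hcon.2.2 q hq v) (Γd hcon hs hp u z)
  exact ((hT1.sub hT2).add h3.1).sub h4.1

/-- d → c. -/
lemma const_of_locsym (S : ACM s) (hs : IsOpen s) (hAK : IsAK s S α)
    (hN : IsNormal s S) (hΓ : IsLeviCivitaOn s S.g Γ)
    (hd : LocallySymmetricOn s Γ) : ConstCurvOn s S.g Γ (-(α^2)) := by
  intro p hp u v x
  have hcon := hΓ.1
  have hα : α ≠ 0 := ne_of_gt hAK.pos
  -- fam1 for q ↦ Rm Γ q u v (ξ q)
  have hF := fam1 hs hp (fun q z => Rm Γ q u v z) (fun z => Rmd hs hp hcon u v z)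
    (fun q hq => ⟨fun a b => Rm_addr hs hq hcon u v a b,
                  fun t a => Rm_smulr hs hq hcon u v t a⟩) (xid S hs hp)
  have heq : (fun q => Rm Γ q u v (S.xi q)) =ᶠ[nhds p]
      (fun q => (α^2) • (S.eta q u • v - S.eta q v • u)) := by
    filter_upwards [hs.mem_nhds hp] with q hq
    exact Rm_xi S hs hq hAK hN hΓ u v
  have hd1 : DifferentiableAt ℝ (fun q => S.eta q u • v) p :=
    (etad S hs hp u).smul_const v
  have hd2 : DifferentiableAt ℝ (fun q => S.eta q v • u) p :=
    (etad S hs hp v).smul_const u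
  have hR : fderiv ℝ (fun q => Rm Γ q u v (S.xi q)) p x
      = (α^2) • (fderiv ℝ (fun q => S.eta q u) p x • v
          - fderiv ℝ (fun q => S.eta q v) p x • u) := by
    rw [heq.fderiv_eq, fderiv_fun_const_smul (hd1.fun_sub hd2), ContinuousLinearMap.smul_apply,
      fderiv_fun_sub hd1 hd2, ContinuousLinearMap.sub_apply,
      fderiv_smul_const (etad S hs hp u) v, fderiv_smul_const (etad S hs hp v) u]
    simp only [ContinuousLinearMap.smulRight_apply]
  have hL := hF.2 x
  beta_reduce at hL
  rw [hR] at hL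
  -- local symmetry at (x,u,v,ξ)
  have hsym := hd p hp x u v (S.xi p)
  unfold covT3 at hsym
  -- substitutions
  have hxi1 := Rm_xi S hs hp hAK hN hΓ u v
  have hxi2 := Rm_xi S hs hp hAK hN hΓ (Γ p x u) v
  have hxi3 := Rm_xi S hs hp hAK hN hΓ u (Γ p x v)
  have hG : Γ p x (Rm Γ p u v (S.xi p))
      = (α^2) • (S.eta p u • Γ p x v - S.eta p v • Γ p x u) := by
    rw [hxi1, conn_smulr hcon hp, conn_subr hcon hp, conn_smulr hcon hp,
      conn_smulr hcon hp]
  have hRdxi : Rm Γ p u v (fderiv ℝ S.xi p x)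
      = α • (Rm Γ p u v x - S.eta p x • Rm Γ p u v (S.xi p))
        - Rm Γ p u v (Γ p x (S.xi p)) := by
    rw [hdxi S hs hp hAK hN hΓ x, Rm_subr hs hp hcon, Rm_smulr hs hp hcon,
      Rm_subr hs hp hcon, Rm_smulr hs hp hcon]
  have he1 := eta_deriv S hs hp hAK hN hΓ x u
  have he2 := eta_deriv S hs hp hAK hN hΓ x v
  have he1v : fderiv ℝ (fun q => S.eta q u) p x • v
      = (S.eta p (Γ p x u) + α * (S.g p x u - S.eta p x * S.eta p u)) • v := by rw [he1]
  have he2u : fderiv ℝ (fun q => S.eta q v) p x • u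
      = (S.eta p (Γ p x v) + α * (S.g p x v - S.eta p x * S.eta p v)) • u := by rw [he2]
  have hgs1v : S.g p x u • v = S.g p u x • v := by rw [g_symm S hp x u]
  have hgs2u : S.g p x v • u = S.g p v x • u := by rw [g_symm S hp x v]
  have hbig : α • Rm Γ p u v x
      = α • ((-(α^2)) • (S.g p v x • u - S.g p u x • v)) := by
    linear_combination (norm := module) - hL - hsym - hRdxi + hG - hxi2 - hxi3
      + (α * S.eta p x) • hxi1 + (α^2) • he1v - (α^2) • he2u
      + (α^3) • hgs1v - (α^3) • hgs2u
  exact smul_right_injective V hα hbig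

end PartG


/-- for an α-Kenmotsu (normal) manifold, the following are
equivalent: `∇̃R̃ = 0`; `R̃ = 0`; constant sectional curvature `-α²`; local
symmetry. -/
theorem stmt_11 (n : ℕ) (s : Set (E (2*n+1))) (hs : IsOpen s) (S : ACM s) (α : ℝ)
    (hAK : IsAK s S α) (hN : IsNormal s S)
    (Γ : E (2*n+1) → E (2*n+1) → E (2*n+1) → E (2*n+1))
    (hΓ : IsLeviCivitaOn s S.g Γ) :
    (ParallelCurv s (canonical α S Γ) ↔ FlatCurv s (canonical α S Γ)) ∧
    (FlatCurv s (canonical α S Γ) ↔ ConstCurvOn s S.g Γ (-(α^2))) ∧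
    (ConstCurvOn s S.g Γ (-(α^2)) ↔ LocallySymmetricOn s Γ) := by
  exact ⟨⟨fun h => flat_of_parallel S hs hAK hN hΓ h,
      fun h => parallel_of_flat S hs hAK hN hΓ h⟩,
    flat_iff_const S hs hAK hN hΓ,
    ⟨fun h => locsym_of_const S hs hΓ h,
      fun h => const_of_locsym S hs hAK hN hΓ h⟩⟩

end AKG
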